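/- arXiv:2205.04783 — 6 statements merged into one kernel-verified Lean document; each statement's English description precedes it below -/
import Mathlib

section
/- A finite simple graph G is chordal if and only if G has a perfect elimination ordering of its vertices. -/
/-- A finite simple graph is *chordal* if every cycle of length at least 4 has a chord,
equivalently (and this is the formalization used here) it contains no induced cycle of
length at least 4. -/
def SimpleGraph.IsChordal {V : Type*} (G : SimpleGraph V) : Prop :=
  ∀ n : ℕ, 4 ≤ n → IsEmpty (SimpleGraph.cycleGraph n ↪g G)

/-- `σ` (listing the vertices as `σ 0, σ 1, …`) is a *perfect elimination ordering* of `G`: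
for every `i`, the neighbours of `σ i` among the later vertices `σ j`, `j > i`, form a
clique in `G`. -/
def SimpleGraph.IsPerfectEliminationOrdering {V : Type*} [Fintype V] (G : SimpleGraph V)
    (σ : Fin (Fintype.card V) ≃ V) : Prop :=
  ∀ i : Fin (Fintype.card V),
    G.IsClique {v | G.Adj (σ i) v ∧ ∃ j : Fin (Fintype.card V), i < j ∧ σ j = v}

namespace ChordalAux
open SimpleGraph

universe u
variable {V : Type u} {G : SimpleGraph V}

/-- `v` is a simplicial vertex: its neighbourhood is a clique. -/
def IsSimplicial (G : SimpleGraph V) (v : V) : Prop := G.IsClique (G.neighborSet v)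

lemma cycle_adj_val {n : ℕ} (hn : 2 ≤ n) {u v : Fin n} :
    (cycleGraph n).Adj u v ↔
      (v.val = u.val + 1 ∨ u.val = v.val + 1 ∨ (u.val = 0 ∧ v.val = n - 1) ∨
        (v.val = 0 ∧ u.val = n - 1)) := by
  obtain ⟨m, rfl⟩ : ∃ m, n = m + 2 := ⟨n - 2, by omega⟩
  have key : ∀ a b : Fin (m + 2), (a - b = 1) ↔ (a.val = b.val + 1 ∨ (b.val = m + 1 ∧ a.val = 0)) := by
    intro a b
    rw [Fin.ext_iff, Fin.sub_def]
    have hb := b.is_lt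
    have ha := a.is_lt
    show (m + 2 - b.val + a.val) % (m + 2) = (1 : Fin (m+2)).val ↔ _
    have h1 : ((1 : Fin (m+2)).val) = 1 := rfl
    rw [h1]
    rcases le_or_gt b.val a.val with h | h
    · have : m + 2 - b.val + a.val = (a.val - b.val) + (m + 2) := by omega
      rw [this, Nat.add_mod_right, Nat.mod_eq_of_lt (by omega)]
      omega
    · rw [Nat.mod_eq_of_lt (by omega)]
      omega
  rw [cycleGraph_adj, key, key]
  omega

lemma support_getElem {V : Type*} {G : SimpleGraph V} {u v : V} (p : G.Walk u v) :
    ∀ i : ℕ, (h : i ≤ p.length) →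
      p.support[i]'(by rw [SimpleGraph.Walk.length_support]; omega) = p.getVert i := by
  induction p with
  | nil =>
    intro i h
    have : i = 0 := by simpa using h
    subst this; rfl
  | cons h q ih =>
    intro i hi
    cases i with
    | zero => rfl
    | succ i =>
      simp only [SimpleGraph.Walk.support_cons, SimpleGraph.Walk.getVert_cons_succ]
      rw [List.getElem_cons_succ]
      exact ih i (by simpa [SimpleGraph.Walk.length_cons] using hi)

lemma getVert_mem_support' {V : Type*} {G : SimpleGraph V} {u v : V} (p : G.Walk u v)
    {i : ℕ} (h : i ≤ p.length) : p.getVert i ∈ p.support := by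
  rw [← support_getElem p i h]; exact List.getElem_mem _

lemma IsPath.getVert_inj {V : Type*} {G : SimpleGraph V} {u v : V} {p : G.Walk u v}
    (hp : p.IsPath) {i j : ℕ} (hi : i ≤ p.length) (hj : j ≤ p.length)
    (h : p.getVert i = p.getVert j) : i = j := by
  have hnd := hp.support_nodup
  rw [← support_getElem p i hi, ← support_getElem p j hj] at h
  exact (List.Nodup.getElem_inj_iff hnd).mp h

/-- `S` separates `a` from `b` in `G`. -/
def Sep (G : SimpleGraph V) (a b : V) (S : Set V) : Prop :=
  a ∉ S ∧ b ∉ S ∧ ∀ p : G.Walk a b, ∃ x ∈ S, x ∈ p.support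

/-- `v` is reachable from `a` by a walk avoiding `S`. -/
def Reach (G : SimpleGraph V) (S : Set V) (a v : V) : Prop :=
  ∃ w : G.Walk a v, ∀ t ∈ w.support, t ∉ S

lemma Reach.self (ha : a ∉ S) : Reach G S a a :=
  ⟨Walk.nil, by simp [ha]⟩

lemma Reach.not_mem {a v : V} {S : Set V} (h : Reach G S a v) : v ∉ S := by
  obtain ⟨w, hw⟩ := h
  exact hw v w.end_mem_support

lemma Reach.adj {a v u : V} {S : Set V} (h : Reach G S a v) (hadj : G.Adj v u)
    (hu : u ∉ S) : Reach G S a u := by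
  obtain ⟨w, hw⟩ := h
  refine ⟨w.concat hadj, ?_⟩
  intro t ht
  rw [Walk.support_concat, List.mem_append] at ht
  rcases ht with ht | ht
  · exact hw t ht
  · simp only [List.mem_singleton] at ht; subst ht; exact hu

lemma Reach.of_mem_support {a v : V} {S : Set V} {w : G.Walk a v}
    (hw : ∀ t ∈ w.support, t ∉ S) {t : V} (ht : t ∈ w.support) : Reach G S a t := by
  classical
  exact ⟨w.takeUntil t ht, fun s hs => hw s (w.support_takeUntil_subset ht hs)⟩

lemma sep_no_cross {a b : V} {S : Set V} (hS : Sep G a b S) {v u : V}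
    (hv : Reach G S a v) (hu : Reach G S b u) (h : v = u ∨ G.Adj v u) : False := by
  obtain ⟨wv, hwv⟩ := hv
  obtain ⟨wu, hwu⟩ := hu
  rcases h with rfl | hadj
  · obtain ⟨x, hxS, hxsupp⟩ := hS.2.2 (wv.append wu.reverse)
    rw [Walk.mem_support_append_iff] at hxsupp
    rcases hxsupp with h | h
    · exact hwv x h hxS
    · rw [Walk.support_reverse, List.mem_reverse] at h
      exact hwu x h hxS
  · obtain ⟨x, hxS, hxsupp⟩ := hS.2.2 (wv.append (Walk.cons hadj wu.reverse))
    rw [Walk.mem_support_append_iff] at hxsupp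
    rcases hxsupp with h | h
    · exact hwv x h hxS
    · rw [Walk.support_cons, List.mem_cons] at h
      rcases h with rfl | h
      · exact hwv _ wv.end_mem_support hxS
      · rw [Walk.support_reverse, List.mem_reverse] at h
        exact hwu x h hxS

/-- Minimality of the separator gives every separator vertex a neighbour in the
`a`-side region. -/
lemma neighbor_in_side {a b : V} {S : Set V} (hS : Sep G a b S) {x : V} (hx : x ∈ S)
    (hmin : ¬ Sep G a b (S \ {x})) : ∃ u, G.Adj x u ∧ Reach G S a u := by
  classical
  rw [Sep] at hmin
  push_neg at hmin
  have hmin' := hmin (fun h => hS.1 h.1) (fun h => hS.2.1 h.1)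
  obtain ⟨p, hp⟩ := hmin'
  -- hp : ∀ y ∈ S \ {x}, y ∉ p.support  (after push_neg shape?)
  set q : G.Walk a b := p.bypass with hqdef
  have hqpath : q.IsPath := p.bypass_isPath
  have hqsub : q.support ⊆ p.support := p.support_bypass_subset
  obtain ⟨y, hyS, hysupp⟩ := hS.2.2 q
  have hyx : y = x := by
    by_contra hne
    exact hp y ⟨hyS, hne⟩ (hqsub hysupp)
  subst hyx
  have hax : a ≠ y := fun h => hS.1 (h ▸ hyS)
  set r : G.Walk a y := q.takeUntil y hysupp with hrdef
  have hrpath : r.IsPath := hqpath.takeUntil hysupp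
  have hrnotnil : ¬ r.reverse.Nil := by
    rw [Walk.nil_iff_length_eq, Walk.length_reverse]
    intro h0
    exact hax ((r.getVert_zero).symm.trans (by rw [← h0]; exact r.getVert_length))
  obtain ⟨u, hadj, r', hr'⟩ := Walk.not_nil_iff.mp hrnotnil
  have hsupp : r.support.reverse = y :: r'.support := by
    rw [← Walk.support_reverse, hr', Walk.support_cons]
  have hynotin : y ∉ r'.support := by
    have : r.support.reverse.Nodup := by
      rw [List.nodup_reverse]; exact hrpath.support_nodup
    rw [hsupp] at this
    exact (List.nodup_cons.mp this).1
  refine ⟨u, hadj, r'.reverse, ?_⟩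
  intro t ht
  rw [Walk.support_reverse, List.mem_reverse] at ht
  have htr : t ∈ r.support := by
    rw [← List.mem_reverse, hsupp]; exact List.mem_cons_of_mem _ ht
  have htq : t ∈ q.support := q.support_takeUntil_subset hysupp htr
  intro htS
  have htx : t ≠ y := fun h => hynotin (h ▸ ht)
  exact hp t ⟨htS, htx⟩ (hqsub htq)

lemma getVert_length_takeUntil {u x y : V} [DecidableEq V] (p : G.Walk x y)
    (h : u ∈ p.support) : p.getVert (p.takeUntil u h).length = u := by
  have h2 := congrArg (fun w : G.Walk x y => w.getVert (p.takeUntil u h).length)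
    (p.take_spec h)
  simp only [Walk.getVert_append, lt_self_iff_false, if_false, Nat.sub_self,
    Walk.getVert_zero] at h2
  exact h2.symm

/-- In a walk of minimal length among walks with support satisfying `Q`,
there is no chord. -/
lemma no_chord {x y : V} {p : G.Walk x y} (hp : p.IsPath) (Q : V → Prop)
    (hpQ : ∀ t ∈ p.support, Q t)
    (hmin : ∀ w : G.Walk x y, (∀ t ∈ w.support, Q t) → p.length ≤ w.length)
    {i j : ℕ} (hij : i + 1 < j) (hj : j ≤ p.length) :
    ¬ G.Adj (p.getVert i) (p.getVert j) := by
  classical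
  intro hadj
  have hi : i ≤ p.length := by omega
  have hu : p.getVert i ∈ p.support := by
    rw [← support_getElem p i hi]; exact List.getElem_mem _
  have hv : p.getVert j ∈ p.support := by
    rw [← support_getElem p j hj]; exact List.getElem_mem _
  set u := p.getVert i
  set v := p.getVert j
  have hposu : (p.takeUntil u hu).length = i :=
    ChordalAux.IsPath.getVert_inj hp (p.length_takeUntil_le hu) hi (getVert_length_takeUntil p hu)
  have hposv : (p.takeUntil v hv).length = j :=
    ChordalAux.IsPath.getVert_inj hp (p.length_takeUntil_le hv) hj (getVert_length_takeUntil p hv)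
  have hlen : (p.takeUntil v hv).length + (p.dropUntil v hv).length = p.length := by
    rw [← Walk.length_append, p.take_spec hv]
  set w' : G.Walk x y := (p.takeUntil u hu).append (Walk.cons hadj (p.dropUntil v hv))
    with hw'
  have hw'Q : ∀ t ∈ w'.support, Q t := by
    intro t ht
    rw [hw', Walk.mem_support_append_iff] at ht
    rcases ht with ht | ht
    · exact hpQ t (p.support_takeUntil_subset hu ht)
    · rw [Walk.support_cons, List.mem_cons] at ht
      rcases ht with rfl | ht
      · exact hpQ _ hu
      · exact hpQ t (p.support_dropUntil_subset hv ht)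
  have := hmin w' hw'Q
  rw [hw', Walk.length_append, Walk.length_cons] at this
  omega

lemma embedding_of_paths {x y : V} {A B : Set V} {p q : G.Walk x y}
    (hp : p.IsPath) (hq : q.IsPath)
    (hpA : ∀ t ∈ p.support, t = x ∨ t = y ∨ t ∈ A)
    (hqB : ∀ t ∈ q.support, t = x ∨ t = y ∨ t ∈ B)
    (hAB : ∀ u ∈ A, ∀ v ∈ B, u ≠ v ∧ ¬G.Adj u v)
    (hpc : ∀ i j : ℕ, i + 1 < j → j ≤ p.length → ¬G.Adj (p.getVert i) (p.getVert j))
    (hqc : ∀ i j : ℕ, i + 1 < j → j ≤ q.length → ¬G.Adj (q.getVert i) (q.getVert j))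
    (hk : 2 ≤ p.length) (hl : 2 ≤ q.length) :
    Nonempty (cycleGraph (p.length + q.length) ↪g G) := by
  set k := p.length with hkdef
  set l := q.length with hldef
  set n := k + l with hndef
  have hn2 : 2 ≤ n := by omega
  set fv : ℕ → V := fun m => if m ≤ k then p.getVert m else q.getVert (n - m) with hfv
  have hgetmem : ∀ m : ℕ, m ≤ k → p.getVert m ∈ p.support := by
    intro m hm; rw [← support_getElem p m hm]; exact List.getElem_mem _
  have hgetmemq : ∀ m : ℕ, m ≤ l → q.getVert m ∈ q.support := by
    intro m hm; rw [← support_getElem q m hm]; exact List.getElem_mem _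
  have hxy : x ≠ y := by
    intro h
    have := IsPath.getVert_inj hp (i := 0) (j := k) (by omega) (by omega)
      (by rw [Walk.getVert_zero, Walk.getVert_length]; exact h)
    omega
  have intP : ∀ m : ℕ, 0 < m → m < k → p.getVert m ∈ A := by
    intro m h0 hmk
    rcases hpA _ (hgetmem m (by omega)) with h | h | h
    · exfalso
      have := IsPath.getVert_inj hp (i := m) (j := 0) (by omega) (by omega)
        (by rw [Walk.getVert_zero]; exact h)
      omega
    · exfalso
      have := IsPath.getVert_inj hp (i := m) (j := k) (by omega) (by omega)
        (by rw [Walk.getVert_length]; exact h)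
      omega
    · exact h
  have intQ : ∀ m : ℕ, 0 < m → m < l → q.getVert m ∈ B := by
    intro m h0 hml
    rcases hqB _ (hgetmemq m (by omega)) with h | h | h
    · exfalso
      have := IsPath.getVert_inj hq (i := m) (j := 0) (by omega) (by omega)
        (by rw [Walk.getVert_zero]; exact h)
      omega
    · exfalso
      have := IsPath.getVert_inj hq (i := m) (j := l) (by omega) (by omega)
        (by rw [Walk.getVert_length]; exact h)
      omega
    · exact h
  -- branch values
  have hfvle : ∀ m : ℕ, m ≤ k → fv m = p.getVert m := by
    intro m hm; simp only [hfv]; rw [if_pos hm]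
  have hfvgt : ∀ m : ℕ, k < m → fv m = q.getVert (n - m) := by
    intro m hm
    have h' : ¬ (m ≤ k) := by omega
    simp only [hfv]; rw [if_neg h']
  -- forward direction, for a < b
  have fwd : ∀ a b : ℕ, a < n → b < n → a < b → G.Adj (fv a) (fv b) →
      b = a + 1 ∨ (a = 0 ∧ b = n - 1) := by
    intro a b ha hb hab hadj
    by_cases hbk : b ≤ k
    · -- both on p
      rw [hfvle a (by omega), hfvle b hbk] at hadj
      by_contra hcon
      push_neg at hcon
      exact hpc a b (by omega) hbk hadj
    · push_neg at hbk
      set m := n - b with hmdef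
      have hm1 : 1 ≤ m := by omega
      have hml : m ≤ l - 1 := by omega
      rw [hfvgt b hbk] at hadj
      by_cases hak : a ≤ k
      · rw [hfvle a hak] at hadj
        rcases Nat.lt_trichotomy a 0 with h | h | h
        · omega
        · -- a = 0 : fv a = x = q.getVert 0
          subst h
          rw [Walk.getVert_zero] at hadj
          have hadj2 : G.Adj (q.getVert 0) (q.getVert m) := by
            rw [Walk.getVert_zero]; exact hadj
          by_cases hm2 : 2 ≤ m
          · exact absurd hadj2 (hqc 0 m (by omega) (by omega))
          · right; constructor; rfl; omega
        · by_cases hak' : a = k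
          · -- fv a = y = q.getVert l
            subst hak'
            rw [Walk.getVert_length] at hadj
            have hadj2 : G.Adj (q.getVert l) (q.getVert m) := by
              rw [Walk.getVert_length]; exact hadj
            by_cases hm2 : m ≤ l - 2
            · exact absurd hadj2.symm (hqc m l (by omega) (by omega))
            · left; omega
          · -- interior of p vs interior of q
            have h1 : p.getVert a ∈ A := intP a h (by omega)
            have h2 : q.getVert m ∈ B := intQ m (by omega) (by omega)
            exact absurd hadj (hAB _ h1 _ h2).2
      · push_neg at hak
        -- both on q
        rw [hfvgt a hak] at hadj
        set ma := n - a with hmadef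
        have : m + 1 ≤ ma := by omega
        by_cases hmm : m + 1 < ma
        · exact absurd hadj.symm (hqc m ma (by omega) (by omega))
        · left; omega
  -- backward direction, for the two canonical shapes
  have bwd : ∀ a b : ℕ, a < n → b < n → (b = a + 1 ∨ (a = 0 ∧ b = n - 1)) →
      G.Adj (fv a) (fv b) := by
    intro a b ha hb hcase
    rcases hcase with rfl | ⟨rfl, rfl⟩
    · by_cases hbk : a + 1 ≤ k
      · rw [hfvle a (by omega), hfvle (a + 1) hbk]
        exact p.adj_getVert_succ (by omega)
      · by_cases hak : a ≤ k
        · -- a = k, b = k + 1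
          have hak' : a = k := by omega
          subst hak'
          rw [hfvle k le_rfl, hfvgt (k + 1) (by omega)]
          have h1 : n - (k + 1) = l - 1 := by omega
          rw [h1, Walk.getVert_length]
          have h3 := q.adj_getVert_succ (i := l - 1) (by omega)
          have h2 : l - 1 + 1 = l := by omega
          rw [h2] at h3
          have h4 : q.getVert l = y := q.getVert_length
          rw [h4] at h3
          exact h3.symm
        · push_neg at hak
          rw [hfvgt a hak, hfvgt (a + 1) (by omega)]
          have h1 : n - a = (n - (a + 1)) + 1 := by omega
          rw [h1]
          exact (q.adj_getVert_succ (by omega)).symm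
    · rw [hfvle 0 (by omega), hfvgt (n - 1) (by omega)]
      have h1 : n - (n - 1) = 1 := by omega
      rw [h1, Walk.getVert_zero]
      have h3 := q.adj_getVert_succ (i := 0) (by omega)
      rw [Walk.getVert_zero] at h3
      exact h3
  -- injectivity
  have finj : ∀ a b : ℕ, a < n → b < n → fv a = fv b → a = b := by
    have cross : ∀ a b : ℕ, a < n → b < n → a ≤ k → k < b → fv a = fv b → False := by
      intro a b ha hb hak hbk heq
      set m := n - b with hmdef
      have hm1 : 1 ≤ m := by omega
      have hml : m ≤ l - 1 := by omega
      rw [hfvle a hak, hfvgt b hbk] at heq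
      rcases Nat.lt_trichotomy a 0 with h | h | h
      · omega
      · subst h
        rw [Walk.getVert_zero] at heq
        have heq2 : q.getVert 0 = q.getVert m := by rw [Walk.getVert_zero]; exact heq
        have := IsPath.getVert_inj hq (i := 0) (j := m) (by omega) (by omega) heq2
        omega
      · by_cases hak' : a = k
        · subst hak'
          rw [Walk.getVert_length] at heq
          have heq2 : q.getVert l = q.getVert m := by rw [Walk.getVert_length]; exact heq
          have := IsPath.getVert_inj hq (i := l) (j := m) (by omega) (by omega) heq2
          omega
        · have h1 : p.getVert a ∈ A := intP a h (by omega)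
          have h2 : q.getVert m ∈ B := intQ m (by omega) (by omega)
          exact (hAB _ h1 _ h2).1 heq
    intro a b ha hb heq
    by_cases hak : a ≤ k <;> by_cases hbk : b ≤ k
    · rw [hfvle a hak, hfvle b hbk] at heq
      exact IsPath.getVert_inj hp (by omega) (by omega) heq
    · exact absurd (cross a b ha hb hak (by omega) heq) not_false
    · exact absurd (cross b a hb ha hbk (by omega) heq.symm) not_false
    · rw [hfvgt a (by omega), hfvgt b (by omega)] at heq
      have := IsPath.getVert_inj hq (i := n - a) (j := n - b) (by omega) (by omega) heq
      omega
  refine ⟨⟨⟨fun i => fv i.val, fun i j h => Fin.ext (finj _ _ i.isLt j.isLt h)⟩, ?_⟩⟩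
  intro i j
  change G.Adj (fv i.val) (fv j.val) ↔ _
  rw [cycle_adj_val hn2]
  constructor
  · intro hadj
    rcases Nat.lt_trichotomy i.val j.val with h | h | h
    · rcases fwd i.val j.val i.isLt j.isLt h hadj with h' | h'
      · left; exact h'
      · right; right; left; exact h'
    · exfalso
      have : (i : Fin n) = j := Fin.ext h
      subst this
      exact G.irrefl hadj
    · rcases fwd j.val i.val j.isLt i.isLt h hadj.symm with h' | h'
      · right; left; exact h'
      · right; right; right; exact h'
  · intro hcase
    rcases hcase with h | h | h | h
    · exact bwd i.val j.val i.isLt j.isLt (Or.inl h)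
    · exact (bwd j.val i.val j.isLt i.isLt (Or.inl h)).symm
    · exact bwd i.val j.val i.isLt j.isLt (Or.inr ⟨h.1, h.2⟩)
    · exact (bwd j.val i.val j.isLt i.isLt (Or.inr ⟨h.1, h.2⟩)).symm

lemma getVert_mem_support {u v : V} (p : G.Walk u v) {i : ℕ} (h : i ≤ p.length) :
    p.getVert i ∈ p.support := by
  rw [← support_getElem p i h]; exact List.getElem_mem _

lemma Sep.symm {a b : V} {S : Set V} (h : Sep G a b S) : Sep G b a S := by
  refine ⟨h.2.1, h.1, fun p => ?_⟩
  obtain ⟨x, hx, hxs⟩ := h.2.2 p.reverse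
  exact ⟨x, hx, by rwa [Walk.support_reverse, List.mem_reverse] at hxs⟩

lemma IsChordal.induce' (h : G.IsChordal) (s : Set V) : (G.induce s).IsChordal :=
  fun n hn => ⟨fun e => (h n hn).false ((Embedding.induce s).comp e)⟩

lemma simplicial_of_induce {W : Set V} {v : V} (hv : v ∈ W)
    (hnbr : ∀ u, G.Adj v u → u ∈ W)
    (hs : IsSimplicial (G.induce W) ⟨v, hv⟩) : IsSimplicial G v := by
  intro u₁ h1 u₂ h2 hne
  have h1' : G.Adj v u₁ := h1
  have h2' : G.Adj v u₂ := h2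
  have m1 : u₁ ∈ W := hnbr _ h1'
  have m2 : u₂ ∈ W := hnbr _ h2'
  have hadj : (G.induce W).Adj ⟨u₁, m1⟩ ⟨u₂, m2⟩ :=
    hs (show (⟨u₁, m1⟩ : W) ∈ (G.induce W).neighborSet ⟨v, hv⟩ from h1')
      (show (⟨u₂, m2⟩ : W) ∈ (G.induce W).neighborSet ⟨v, hv⟩ from h2')
      (fun h => hne (congrArg Subtype.val h))
  exact hadj

lemma dirac_pair : ∀ (N : ℕ) {V : Type u} [Fintype V] (G : SimpleGraph V),
    Fintype.card V ≤ N → G.IsChordal → ∀ a b : V, a ≠ b → ¬G.Adj a b →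
    ∃ x y : V, x ≠ y ∧ ¬G.Adj x y ∧ IsSimplicial G x ∧ IsSimplicial G y := by
  intro N
  induction N with
  | zero =>
    intro V _ G hcard _ a _ _ _
    exact absurd (Fintype.card_pos_iff.mpr ⟨a⟩) (by omega)
  | succ N IH =>
    intro V _ G hcard hchord a b hab hnadj
    classical
    -- a separator exists
    have hsep0 : ∃ S : Finset V, Sep G a b ↑S := by
      refine ⟨Finset.univ \ {a, b}, by simp, by simp, ?_⟩
      intro p
      set q := p.bypass with hq
      have hqp : q.IsPath := p.bypass_isPath
      have hga : q.getVert 0 = a := q.getVert_zero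
      have hgb : q.getVert q.length = b := q.getVert_length
      have hlen0 : q.length ≠ 0 := by
        intro h0; rw [h0] at hgb; exact hab (hga.symm.trans hgb)
      have hlen1 : q.length ≠ 1 := by
        intro h1
        have := q.adj_getVert_succ (i := 0) (by omega)
        rw [hga, show (0 + 1 : ℕ) = q.length from h1.symm, hgb] at this
        exact hnadj this
      have hadj01 : G.Adj a (q.getVert 1) := by
        have := q.adj_getVert_succ (i := 0) (by omega)
        rwa [hga] at this
      refine ⟨q.getVert 1, ?_, ?_⟩
      · have hne_a : q.getVert 1 ≠ a := (G.ne_of_adj hadj01).symm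
        have hne_b : q.getVert 1 ≠ b := by
          intro h
          have h2 : q.getVert 1 = q.getVert q.length := by rw [hgb]; exact h
          have := IsPath.getVert_inj hqp (i := 1) (j := q.length) (by omega) le_rfl h2
          omega
        simp [hne_a, hne_b]
      · exact p.support_bypass_subset (getVert_mem_support q (by omega))
    -- minimal separator
    let P : ℕ → Prop := fun m => ∃ S : Finset V, Sep G a b ↑S ∧ S.card = m
    have hP : ∃ m, P m := by
      obtain ⟨S, hS⟩ := hsep0; exact ⟨S.card, S, hS, rfl⟩
    obtain ⟨S, hS, hScard⟩ := Nat.find_spec hP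
    have hSmin : ∀ T : Finset V, Sep G a b ↑T → S.card ≤ T.card := by
      intro T hT
      rw [hScard]
      exact Nat.find_min' hP ⟨T, hT, rfl⟩
    set A : Set V := {v | Reach G ↑S a v} with hA
    set B : Set V := {v | Reach G ↑S b v} with hB
    have herase : ∀ x ∈ S, ¬ Sep G a b (↑S \ {x}) := by
      intro x hx hcon
      have : ((S.erase x : Finset V) : Set V) = ↑S \ {x} := by
        simp [Finset.coe_erase]
      have hle := hSmin (S.erase x) (by rw [this]; exact hcon)
      have := Finset.card_erase_lt_of_mem hx
      omega
    -- S is a clique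
    have hclique : ∀ x ∈ S, ∀ y ∈ S, x ≠ y → G.Adj x y := by
      intro x hxS y hyS hxyne
      by_contra hxy
      obtain ⟨ux, hadjx, hRx⟩ := neighbor_in_side hS hxS (herase x hxS)
      obtain ⟨uy, hadjy, hRy⟩ := neighbor_in_side hS hyS (herase y hyS)
      obtain ⟨vx, hadjvx, hRvx⟩ := neighbor_in_side hS.symm hxS (fun h => herase x hxS h.symm)
      obtain ⟨vy, hadjvy, hRvy⟩ := neighbor_in_side hS.symm hyS (fun h => herase y hyS h.symm)
      -- connector through A
      have conn : ∀ (c : V) (hc : Reach G ↑S c c) (C : Set V), True → True := fun _ _ _ _ => trivial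
      -- build the two minimal paths
      have build : ∀ (C : Set V) (ww : G.Walk x y),
          (∀ t ∈ ww.support, t = x ∨ t = y ∨ t ∈ C) →
          ∃ pp : G.Walk x y, pp.IsPath ∧ (∀ t ∈ pp.support, t = x ∨ t = y ∨ t ∈ C) ∧
            (∀ i j : ℕ, i + 1 < j → j ≤ pp.length → ¬G.Adj (pp.getVert i) (pp.getVert j)) ∧
            2 ≤ pp.length := by
        intro C ww hww
        set Q : V → Prop := fun t => t = x ∨ t = y ∨ t ∈ C with hQ
        let L : ℕ → Prop := fun m => ∃ w : G.Walk x y, (∀ t ∈ w.support, Q t) ∧ w.length = m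
        have hL : ∃ m, L m := ⟨ww.length, ww, hww, rfl⟩
        obtain ⟨w, hwQ, hwlen⟩ := Nat.find_spec hL
        have hmin : ∀ w' : G.Walk x y, (∀ t ∈ w'.support, Q t) → w.length ≤ w'.length := by
          intro w' hw'
          rw [hwlen]
          exact Nat.find_min' hL ⟨w', hw', rfl⟩
        set pp := w.bypass with hpp
        have hppQ : ∀ t ∈ pp.support, Q t := fun t ht => hwQ t (w.support_bypass_subset ht)
        have hpplen : pp.length = w.length :=
          le_antisymm w.length_bypass_le (hmin pp hppQ)
        have hppmin : ∀ w' : G.Walk x y, (∀ t ∈ w'.support, Q t) → pp.length ≤ w'.length :=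
          fun w' hw' => hpplen ▸ hmin w' hw'
        have hppP : pp.IsPath := w.bypass_isPath
        have hlen0 : pp.length ≠ 0 := by
          intro h0
          have h1 := pp.getVert_length
          rw [h0, pp.getVert_zero] at h1
          exact hxyne h1
        have hlen1 : pp.length ≠ 1 := by
          intro h1
          have := pp.adj_getVert_succ (i := 0) (by omega)
          rw [pp.getVert_zero, show (0 + 1 : ℕ) = pp.length from h1.symm,
            pp.getVert_length] at this
          exact hxy this
        exact ⟨pp, hppP, hppQ, fun i j hij hj => no_chord hppP Q hppQ hppmin hij hj,
          by omega⟩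
      -- the A-side walk
      obtain ⟨wxa, hwxa⟩ := hRx
      obtain ⟨wya, hwya⟩ := hRy
      have hwA : ∀ t ∈ ((wxa.reverse.append wya).concat hadjy.symm).support,
          t = x ∨ t = y ∨ t ∈ A := by
        intro t ht
        rw [Walk.support_concat, List.mem_append] at ht
        rcases ht with ht | ht
        · rw [Walk.mem_support_append_iff] at ht
          rcases ht with ht | ht
          · rw [Walk.support_reverse, List.mem_reverse] at ht
            exact Or.inr (Or.inr (Reach.of_mem_support hwxa ht))
          · exact Or.inr (Or.inr (Reach.of_mem_support hwya ht))
        · simp only [List.mem_singleton] at ht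
          exact Or.inr (Or.inl ht)
      have hwalkA : ∀ t ∈ (Walk.cons hadjx
          ((wxa.reverse.append wya).concat hadjy.symm)).support, t = x ∨ t = y ∨ t ∈ A := by
        intro t ht
        rw [Walk.support_cons, List.mem_cons] at ht
        rcases ht with rfl | ht
        · exact Or.inl rfl
        · exact hwA t ht
      obtain ⟨pA, hpA, hpAQ, hpAc, hpA2⟩ :=
        build A (Walk.cons hadjx ((wxa.reverse.append wya).concat hadjy.symm)) hwalkA
      -- the B-side walk
      obtain ⟨wxb, hwxb⟩ := hRvx
      obtain ⟨wyb, hwyb⟩ := hRvy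
      have hwB : ∀ t ∈ ((wxb.reverse.append wyb).concat hadjvy.symm).support,
          t = x ∨ t = y ∨ t ∈ B := by
        intro t ht
        rw [Walk.support_concat, List.mem_append] at ht
        rcases ht with ht | ht
        · rw [Walk.mem_support_append_iff] at ht
          rcases ht with ht | ht
          · rw [Walk.support_reverse, List.mem_reverse] at ht
            exact Or.inr (Or.inr (Reach.of_mem_support hwxb ht))
          · exact Or.inr (Or.inr (Reach.of_mem_support hwyb ht))
        · simp only [List.mem_singleton] at ht
          exact Or.inr (Or.inl ht)
      have hwalkB : ∀ t ∈ (Walk.cons hadjvx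
          ((wxb.reverse.append wyb).concat hadjvy.symm)).support, t = x ∨ t = y ∨ t ∈ B := by
        intro t ht
        rw [Walk.support_cons, List.mem_cons] at ht
        rcases ht with rfl | ht
        · exact Or.inl rfl
        · exact hwB t ht
      obtain ⟨pB, hpB, hpBQ, hpBc, hpB2⟩ :=
        build B (Walk.cons hadjvx ((wxb.reverse.append wyb).concat hadjvy.symm)) hwalkB
      have hABdisj : ∀ u ∈ A, ∀ v ∈ B, u ≠ v ∧ ¬G.Adj u v := by
        intro u hu v hv
        exact ⟨fun h => sep_no_cross hS hu hv (Or.inl h),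
          fun h => sep_no_cross hS hu hv (Or.inr h)⟩
      have hemb := embedding_of_paths hpA hpB hpAQ hpBQ hABdisj hpAc hpBc hpA2 hpB2
      exact (hchord (pA.length + pB.length) (by omega)).false hemb.some
    -- side construction
    have closureA : ∀ v ∈ A, ∀ u, G.Adj v u → u ∈ A ∪ ↑S := by
      intro v hv u hadj
      by_cases hu : u ∈ (↑S : Set V)
      · exact Or.inr hu
      · exact Or.inl (Reach.adj hv hadj hu)
    have closureB : ∀ v ∈ B, ∀ u, G.Adj v u → u ∈ B ∪ ↑S := by
      intro v hv u hadj
      by_cases hu : u ∈ (↑S : Set V)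
      · exact Or.inr hu
      · exact Or.inl (Reach.adj hv hadj hu)
    have side : ∀ (C : Set V), (∀ v ∈ C, ∀ u, G.Adj v u → u ∈ C ∪ ↑S) →
        ∀ c ∈ C, Fintype.card ↥(C ∪ ↑S) ≤ N →
        ∃ z ∈ C, IsSimplicial G z := by
      intro C hclo c hc hcardC
      set W : Set V := C ∪ ↑S with hW
      by_cases hcomp : ∀ u v : V, u ∈ W → v ∈ W → u ≠ v → G.Adj u v
      · refine ⟨c, hc, ?_⟩
        intro u₁ h1 u₂ h2 hne
        exact hcomp _ _ (hclo c hc u₁ h1) (hclo c hc u₂ h2) hne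
      · push_neg at hcomp
        obtain ⟨u, v, hu, hv, hne, hnadj'⟩ := hcomp
        have hchord' : (G.induce W).IsChordal := IsChordal.induce' hchord W
        obtain ⟨x', y', hne', hnadj'', hs1, hs2⟩ :=
          IH (G.induce W) hcardC hchord' ⟨u, hu⟩ ⟨v, hv⟩
            (fun h => hne (congrArg Subtype.val h)) hnadj'
        have hnotboth : ¬ ((x' : V) ∈ (↑S : Set V) ∧ (y' : V) ∈ (↑S : Set V)) := by
          rintro ⟨hx', hy'⟩
          have : (x' : V) ≠ (y' : V) := fun h => hne' (Subtype.ext h)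
          exact hnadj'' (hclique _ hx' _ hy' this)
        have hpick : ∃ z : ↥W, (z : V) ∈ C ∧ IsSimplicial (G.induce W) z := by
          by_cases hx' : (x' : V) ∈ (↑S : Set V)
          · have hy' : (y' : V) ∉ (↑S : Set V) := fun h => hnotboth ⟨hx', h⟩
            rcases y'.2 with h | h
            · exact ⟨y', h, hs2⟩
            · exact absurd h hy'
          · rcases x'.2 with h | h
            · exact ⟨x', h, hs1⟩
            · exact absurd h hx'
        obtain ⟨z, hzC, hzs⟩ := hpick
        refine ⟨z, hzC, ?_⟩
        have hnbr : ∀ u, G.Adj (z : V) u → (u : V) ∈ W := fun u h => hclo _ hzC u h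
        refine simplicial_of_induce z.2 hnbr ?_
        have : (⟨(z : V), z.2⟩ : ↥W) = z := Subtype.ext rfl
        rw [this]
        exact hzs
    -- apply to both sides
    have haA : a ∈ A := Reach.self hS.1
    have hbB : b ∈ B := Reach.self hS.2.1
    have hbnA : b ∉ A ∪ ↑S := by
      rintro (h | h)
      · obtain ⟨w, hw⟩ := h
        obtain ⟨t, htS, hts⟩ := hS.2.2 w
        exact hw t hts htS
      · exact hS.2.1 h
    have hanB : a ∉ B ∪ ↑S := by
      rintro (h | h)
      · obtain ⟨w, hw⟩ := h
        obtain ⟨t, htS, hts⟩ := hS.symm.2.2 w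
        exact hw t hts htS
      · exact hS.1 h
    have hcardA : Fintype.card ↥(A ∪ ↑S) ≤ N := by
      have h1 : Fintype.card ↥(A ∪ ↑S) < Fintype.card V :=
        Fintype.card_lt_of_injective_of_notMem Subtype.val Subtype.val_injective
          (by rwa [Subtype.range_coe])
      omega
    have hcardB : Fintype.card ↥(B ∪ ↑S) ≤ N := by
      have h1 : Fintype.card ↥(B ∪ ↑S) < Fintype.card V :=
        Fintype.card_lt_of_injective_of_notMem Subtype.val Subtype.val_injective
          (by rwa [Subtype.range_coe])
      omega
    obtain ⟨zA, hzA, hsA⟩ := side A closureA a haA hcardA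
    obtain ⟨zB, hzB, hsB⟩ := side B closureB b hbB hcardB
    exact ⟨zA, zB, fun h => sep_no_cross hS hzA hzB (Or.inl h),
      fun h => sep_no_cross hS hzA hzB (Or.inr h), hsA, hsB⟩

lemma exists_simplicial [Fintype V] [Nonempty V] (h : G.IsChordal) :
    ∃ v, IsSimplicial G v := by
  classical
  by_cases hcomp : ∀ u v : V, u ≠ v → G.Adj u v
  · obtain ⟨v⟩ := ‹Nonempty V›
    exact ⟨v, fun u₁ _ u₂ _ hne => hcomp _ _ hne⟩
  · push_neg at hcomp
    obtain ⟨a, b, hab, hnadj⟩ := hcomp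
    obtain ⟨x, _, _, _, hs, _⟩ := dirac_pair (Fintype.card V) G le_rfl h a b hab hnadj
    exact ⟨x, hs⟩

lemma chordal_of_peo [Fintype V] (σ : Fin (Fintype.card V) ≃ V)
    (hσ : G.IsPerfectEliminationOrdering σ) : G.IsChordal := by
  intro n hn
  constructor
  intro e
  obtain ⟨m, rfl⟩ : ∃ m, n = m + 1 := ⟨n - 1, by omega⟩
  obtain ⟨t, -, ht⟩ := Finset.exists_min_image Finset.univ
    (fun t : Fin (m + 1) => (σ.symm (e t)).val) ⟨⟨0, by omega⟩, Finset.mem_univ _⟩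
  set u : Fin (m + 1) := t + 1 with hu
  set w : Fin (m + 1) := t - 1 with hw
  have hun : u.val = if t = Fin.last m then 0 else t.val + 1 := Fin.val_add_one t
  have hwn : w.val = if t = 0 then m else t.val - 1 := Fin.coe_sub_one t
  have htl : (Fin.last m).val = m := rfl
  have ht0 : (0 : Fin (m+1)).val = 0 := rfl
  have hm : 3 ≤ m := by omega
  have hvals : (u.val = t.val + 1 ∨ (t.val = m ∧ u.val = 0)) ∧
      (t.val = w.val + 1 ∨ (t.val = 0 ∧ w.val = m)) := by
    constructor
    · by_cases h : t = Fin.last m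
      · right
        exact ⟨by rw [Fin.ext_iff] at h; omega, by rw [hun, if_pos h]⟩
      · left; rw [hun, if_neg h]
    · by_cases h : t = 0
      · right
        exact ⟨by rw [Fin.ext_iff] at h; omega, by rw [hwn, if_pos h]⟩
      · left
        rw [hwn, if_neg h]
        have : t.val ≠ 0 := fun hc => h (Fin.ext hc)
        omega
  have h2n : 2 ≤ m + 1 := by omega
  have hadj_tu : (cycleGraph (m + 1)).Adj t u := by
    rw [cycle_adj_val h2n]
    rcases hvals.1 with h | h
    · left; exact h
    · right; right; right; exact ⟨h.2, by omega⟩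
  have hadj_tw : (cycleGraph (m + 1)).Adj t w := by
    rw [cycle_adj_val h2n]
    rcases hvals.2 with h | h
    · right; left; exact h
    · right; right; left; exact ⟨h.1, by omega⟩
  have huw_ne : u ≠ w := by
    intro h
    rw [Fin.ext_iff] at h
    rcases hvals.1 with h1 | h1 <;> rcases hvals.2 with h2 | h2 <;> omega
  have hut_ne : u ≠ t := (cycleGraph (m+1)).ne_of_adj hadj_tu.symm
  have hwt_ne : w ≠ t := (cycleGraph (m+1)).ne_of_adj hadj_tw.symm
  have hnadj_uw : ¬ (cycleGraph (m + 1)).Adj u w := by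
    rw [cycle_adj_val h2n]
    have hul := u.isLt
    have hwl := w.isLt
    have htt := t.isLt
    rcases hvals.1 with h1 | h1 <;> rcases hvals.2 with h2 | h2 <;>
      · push_neg
        refine ⟨by omega, by omega, fun hc => by omega, fun hc => by omega⟩
  -- now use the PEO
  set i := σ.symm (e t) with hi
  have hσi : σ i = e t := σ.apply_symm_apply _
  have mem : ∀ z : Fin (m + 1), (cycleGraph (m + 1)).Adj t z → z ≠ t →
      e z ∈ {v | G.Adj (σ i) v ∧ ∃ j, i < j ∧ σ j = v} := by
    intro z hadj hz
    refine ⟨by rw [hσi]; exact e.map_rel_iff.mpr hadj, σ.symm (e z), ?_, σ.apply_symm_apply _⟩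
    have hle : i.val ≤ (σ.symm (e z)).val := ht z (Finset.mem_univ _)
    have hne : i ≠ σ.symm (e z) := by
      intro h
      have := σ.apply_symm_apply (e z)
      rw [← h, hσi] at this
      exact hz (e.injective this.symm)
    rw [Fin.lt_iff_val_lt_val]
    rcases Nat.lt_or_ge i.val (σ.symm (e z)).val with h | h
    · exact h
    · exact absurd (Fin.ext (by omega)) hne
  have h1 := mem u hadj_tu hut_ne
  have h2 := mem w hadj_tw hwt_ne
  have hne' : e u ≠ e w := fun h => huw_ne (e.injective h)
  have := hσ i h1 h2 hne'
  exact hnadj_uw (e.map_rel_iff.mp this)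

lemma exists_peo : ∀ (N : ℕ) {V : Type u} [Fintype V] (G : SimpleGraph V),
    Fintype.card V = N → G.IsChordal →
    ∃ σ : Fin (Fintype.card V) ≃ V, G.IsPerfectEliminationOrdering σ := by
  intro N
  induction N with
  | zero =>
    intro V _ G hcard _
    refine ⟨(Fintype.equivFin V).symm, fun i => ?_⟩
    exfalso
    have h := i.isLt
    omega
  | succ N IH =>
    intro V _ G hcard hchord
    classical
    have hne : Nonempty V := Fintype.card_pos_iff.mp (by omega)
    obtain ⟨v, hv⟩ := exists_simplicial hchord
    set W : Set V := {u | u ≠ v} with hWdef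
    have hcW : Fintype.card ↥W = N := by
      have h1 : Fintype.card ↥W = Fintype.card {u // u ≠ v} :=
        Fintype.card_congr (Equiv.refl _)
      rw [h1, Fintype.card_subtype_compl (p := fun u => u = v), Fintype.card_subtype_eq]
      omega
    obtain ⟨σ', hσ'⟩ := IH (G.induce W) hcW (IsChordal.induce' hchord W)
    set σ'' : Fin N ≃ ↥W := (finCongr hcW.symm).trans σ' with hσ''def
    set σ : Fin (Fintype.card V) ≃ V :=
      { toFun := fun i => if h : i.val = 0 then v else (σ'' ⟨i.val - 1, by omega⟩ : V)
        invFun := fun u => if h : u = v then ⟨0, by omega⟩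
          else ⟨(σ''.symm ⟨u, h⟩).val + 1, by have := (σ''.symm ⟨u, h⟩).isLt; omega⟩
        left_inv := by
          intro i
          dsimp only
          by_cases h : i.val = 0
          · rw [dif_pos h, dif_pos rfl]
            exact Fin.ext h.symm
          · rw [dif_neg h, dif_neg (σ'' ⟨i.val - 1, by omega⟩).2]
            apply Fin.ext
            simp only []
            have : (⟨(σ'' ⟨i.val - 1, by omega⟩ : V), (σ'' ⟨i.val - 1, by omega⟩).2⟩ : ↥W)
                = σ'' ⟨i.val - 1, by omega⟩ := Subtype.ext rfl
            rw [this, Equiv.symm_apply_apply]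
            simp only []
            omega
        right_inv := by
          intro u
          dsimp only
          by_cases h : u = v
          · rw [dif_pos h, dif_pos rfl]
            exact h.symm
          · rw [dif_neg h, dif_neg (by simp)]
            have h2 : (⟨(σ''.symm ⟨u, h⟩).val + 1 - 1, by have := (σ''.symm ⟨u, h⟩).isLt; omega⟩ :
                Fin N) = σ''.symm ⟨u, h⟩ := Fin.ext (by simp)
            rw [h2, Equiv.apply_symm_apply] } with hσdef
    have hzero : ∀ i : Fin (Fintype.card V), i.val = 0 → σ i = v := by
      intro i h
      rw [hσdef]
      simp only [Equiv.coe_fn_mk]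
      rw [dif_pos h]
    have hval : ∀ (j : Fin (Fintype.card V)) (hj : j.val ≠ 0),
        σ j = (σ' ⟨j.val - 1, by omega⟩ : V) := by
      intro j hj
      rw [hσdef]
      simp only [Equiv.coe_fn_mk]
      rw [dif_neg hj, hσ''def]
      simp only [Equiv.trans_apply, finCongr_apply]
      exact congrArg (fun z => (σ' z : V)) (Fin.ext (by simp))
    refine ⟨σ, fun i => ?_⟩
    by_cases hi0 : i.val = 0
    · have hσi : σ i = v := hzero i hi0
      refine SimpleGraph.IsClique.subset ?_ hv
      intro w hw
      rw [hσi] at hw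
      exact hw.1
    · -- σ i is in W
      obtain ⟨i₂, hi₂val⟩ : ∃ i₂ : Fin (Fintype.card ↥W), i₂.val = i.val - 1 :=
        ⟨⟨i.val - 1, by omega⟩, rfl⟩
      have hσi : σ i = (σ' i₂ : V) :=
        (hval i hi0).trans (congrArg (fun z => (σ' z : V)) (Fin.ext hi₂val.symm))
      intro w₁ hw₁ w₂ hw₂ hne
      obtain ⟨hadj₁, j₁, hij₁, hσj₁⟩ := hw₁
      obtain ⟨hadj₂, j₂, hij₂, hσj₂⟩ := hw₂
      have hj₁0 : j₁.val ≠ 0 := by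
        intro h
        rw [Fin.lt_iff_val_lt_val] at hij₁
        omega
      have hj₂0 : j₂.val ≠ 0 := by
        intro h
        rw [Fin.lt_iff_val_lt_val] at hij₂
        omega
      have hw₁W : w₁ ∈ W := by
        rw [← hσj₁, hval j₁ hj₁0]; exact (σ' _).2
      have hw₂W : w₂ ∈ W := by
        rw [← hσj₂, hval j₂ hj₂0]; exact (σ' _).2
      have hmem : ∀ (w : V) (hwW : w ∈ W) (j : Fin (Fintype.card V)) (hj0 : j.val ≠ 0)
          (hij : i < j) (hσj : σ j = w) (hadj : G.Adj (σ i) w),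
          (⟨w, hwW⟩ : ↥W) ∈ {w' | (G.induce W).Adj (σ' i₂) w' ∧
            ∃ j' : Fin (Fintype.card ↥W), i₂ < j' ∧ σ' j' = w'} := by
        intro w hwW j hj0 hij hσj hadj
        constructor
        · show G.Adj (σ' i₂ : V) w
          rw [← hσi]
          exact hadj
        · refine ⟨⟨j.val - 1, by omega⟩, ?_, ?_⟩
          · rw [Fin.lt_iff_val_lt_val] at hij ⊢
            have : (⟨j.val - 1, by omega⟩ : Fin (Fintype.card ↥W)).val = j.val - 1 := rfl
            omega
          · apply Subtype.ext
            rw [← hval j hj0]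
            exact hσj
      have hm₁ := hmem w₁ hw₁W j₁ hj₁0 hij₁ hσj₁ hadj₁
      have hm₂ := hmem w₂ hw₂W j₂ hj₂0 hij₂ hσj₂ hadj₂
      have hnee : (⟨w₁, hw₁W⟩ : ↥W) ≠ ⟨w₂, hw₂W⟩ := fun h => hne (congrArg Subtype.val h)
      exact hσ' i₂ hm₁ hm₂ hnee

end ChordalAux

/-- A finite simple graph `G` is chordal if and only if `G` has a perfect elimination
ordering of its vertices. -/
theorem isChordal_iff_exists_perfectEliminationOrdering {V : Type*} [Fintype V]
    (G : SimpleGraph V) :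
    G.IsChordal ↔
      ∃ σ : Fin (Fintype.card V) ≃ V, G.IsPerfectEliminationOrdering σ := by
  classical
  constructor
  · intro h
    exact ChordalAux.exists_peo (Fintype.card V) G rfl h
  · rintro ⟨σ, hσ⟩
    exact ChordalAux.chordal_of_peo σ hσ
end

section
/- Let (T_1,…,T_{n−1}) be a vine on n ≥ 2 variables. For every k ∈ {1,…,n−1}: if two distinct clusters A and B of T_k both contain an element s, then s is contained in every cluster on the path in T_k between A and B (and hence in the intersection of every pair of consecutive clusters on that path). -/
/-- A *vine* on the `n` variables `{0, …, n-1}` (represented by `Fin n`): a sequence of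
cluster trees `T_1, …, T_(n-1)`, where the clusters of `T_k` are `k`-element subsets of
the variables, `T_k` has `n - k + 1` clusters, `T_1` is a tree on the `n` singletons,
for `k ≥ 2` the clusters of `T_k` are exactly the unions `A ∪ B` over the edges
`{A, B}` of `T_(k-1)`, and any two adjacent clusters of `T_k` intersect in exactly
`k - 1` elements. -/
structure Vine (n : ℕ) where
  /-- the set of clusters (nodes) of the tree `T_k` -/
  clusters : ℕ → Set (Finset (Fin n))
  /-- the adjacency (edge) relation of the tree `T_k` -/
  adj : ℕ → Finset (Fin n) → Finset (Fin n) → Prop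
  adj_symm : ∀ k A B, adj k A B → adj k B A
  adj_ne : ∀ k A B, adj k A B → A ≠ B
  adj_mem : ∀ k A B, adj k A B → A ∈ clusters k ∧ B ∈ clusters k
  card_of_mem_clusters : ∀ k, 1 ≤ k → k ≤ n - 1 → ∀ A ∈ clusters k, A.card = k
  ncard_clusters : ∀ k, 1 ≤ k → k ≤ n - 1 → (clusters k).ncard = n - k + 1
  clusters_one : clusters 1 = Set.range fun i : Fin n => ({i} : Finset (Fin n))
  clusters_succ : ∀ k, 2 ≤ k → k ≤ n - 1 →
    clusters k = {C | ∃ A B, adj (k - 1) A B ∧ C = A ∪ B}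
  card_inter_of_adj : ∀ k, 1 ≤ k → k ≤ n - 1 →
    ∀ A B, adj k A B → (A ∩ B).card = k - 1
  isTree : ∀ k, 1 ≤ k → k ≤ n - 1 →
    ({ Adj := fun A B : clusters k => adj k A.1 B.1,
       symm := ⟨fun A B h => adj_symm k A.1 B.1 h⟩,
       loopless := ⟨fun A h => adj_ne k A.1 A.1 h rfl⟩ } :
      SimpleGraph (clusters k)).IsTree

/-- The tree `T_k` of a vine, as a simple graph on its set of clusters. -/
def Vine.graph {n : ℕ} (W : Vine n) (k : ℕ) : SimpleGraph (W.clusters k) where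
  Adj A B := W.adj k A.1 B.1
  symm := ⟨fun A B h => W.adj_symm k A.1 B.1 h⟩
  loopless := ⟨fun A h => W.adj_ne k A.1 A.1 h rfl⟩

open SimpleGraph

private lemma acyclic_of_le {V : Type*} {H K : SimpleGraph V} (hle : K ≤ H)
    (h : H.IsAcyclic) : K.IsAcyclic :=
  fun _ c hc => h (c.mapLe hle) (hc.mapLe hle)

private lemma forest_bound {V : Type*} [Finite V] :
    ∀ (N : ℕ) (H : SimpleGraph V), H.edgeSet.ncard = N → H.IsAcyclic →
      ∀ S : Set V, (∀ a b, H.Adj a b → a ∈ S) →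
        (S.Nonempty → H.edgeSet.ncard + 1 ≤ S.ncard) ∧
        (H.edgeSet.ncard + 1 = S.ncard → ∀ a ∈ S, ∀ b ∈ S, H.Reachable a b) := by
  intro N
  induction N using Nat.strong_induction_on with
  | _ N ih =>
    intro H hN hac S hS
    rcases Set.eq_empty_or_nonempty H.edgeSet with hE | ⟨e, he⟩
    · have h0 : H.edgeSet.ncard = 0 := by rw [hE]; simp
      constructor
      · intro hne
        rw [h0]
        exact (Set.ncard_pos (Set.toFinite S)).2 hne
      · intro hcard a ha b hb
        rw [h0] at hcard
        obtain ⟨c, rfl⟩ := Set.ncard_eq_one.1 hcard.symm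
        rw [Set.mem_singleton_iff] at ha hb
        subst ha; subst hb
        exact Reachable.refl _
    · induction e using Sym2.ind with
      | _ u v =>
      rw [mem_edgeSet] at he
      have huv : H.Adj u v := he
      set H' : SimpleGraph V := H.deleteEdges {s(u, v)} with hH'
      have hbr : ¬ H'.Reachable u v :=
        (isBridge_iff.1 ((isAcyclic_iff_forall_adj_isBridge.1 hac) huv))
      have hle' : H' ≤ H := deleteEdges_le _
      have hE' : H'.edgeSet = H.edgeSet \ {s(u, v)} := edgeSet_deleteEdges _
      have hcard' : H'.edgeSet.ncard + 1 = N := by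
        rw [hE', Set.ncard_diff_singleton_add_one (by rwa [mem_edgeSet]) (Set.toFinite _), hN]
      set Ru : Set V := {w | H'.Reachable u w} with hRu
      have hclosed : ∀ a b, H'.Adj a b → a ∈ Ru → b ∈ Ru :=
        fun a b hab ha => ha.trans hab.reachable
      set Hu : SimpleGraph V :=
        { Adj := fun a b => H'.Adj a b ∧ a ∈ Ru ∧ b ∈ Ru
          symm := ⟨fun a b h => ⟨h.1.symm, h.2.2, h.2.1⟩⟩
          loopless := ⟨fun a h => H'.loopless.irrefl a h.1⟩ } with hHu
      set Hv : SimpleGraph V :=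
        { Adj := fun a b => H'.Adj a b ∧ a ∉ Ru ∧ b ∉ Ru
          symm := ⟨fun a b h => ⟨h.1.symm, h.2.2, h.2.1⟩⟩
          loopless := ⟨fun a h => H'.loopless.irrefl a h.1⟩ } with hHv
      have hHu_le' : Hu ≤ H' := fun a b h => h.1
      have hHv_le' : Hv ≤ H' := fun a b h => h.1
      have hHu_le : Hu ≤ H := le_trans hHu_le' hle'
      have hHv_le : Hv ≤ H := le_trans hHv_le' hle'
      have hsplit : H'.edgeSet = Hu.edgeSet ∪ Hv.edgeSet := by
        ext e
        induction e using Sym2.ind with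
        | _ a b =>
          simp only [mem_edgeSet, Set.mem_union]
          constructor
          · intro h
            by_cases ha : a ∈ Ru
            · exact Or.inl ⟨h, ha, hclosed a b h ha⟩
            · exact Or.inr ⟨h, ha, fun hb => ha (hclosed b a h.symm hb)⟩
          · rintro (h | h) <;> exact h.1
      have hdisj : Disjoint Hu.edgeSet Hv.edgeSet := by
        rw [Set.disjoint_left]
        intro e h1 h2
        induction e using Sym2.ind with
        | _ a b =>
          rw [mem_edgeSet] at h1 h2
          exact h2.2.1 h1.2.1
      have hcardsplit : H'.edgeSet.ncard = Hu.edgeSet.ncard + Hv.edgeSet.ncard := by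
        rw [hsplit, Set.ncard_union_eq hdisj (Set.toFinite _) (Set.toFinite _)]
      have hNu_lt : Hu.edgeSet.ncard < N := by omega
      have hNv_lt : Hv.edgeSet.ncard < N := by omega
      obtain ⟨hua, hub⟩ := ih _ hNu_lt Hu rfl (acyclic_of_le hHu_le hac) (S ∩ Ru)
        (fun a b h => ⟨hS a b (hHu_le h), h.2.1⟩)
      obtain ⟨hva, hvb⟩ := ih _ hNv_lt Hv rfl (acyclic_of_le hHv_le hac) (S \ Ru)
        (fun a b h => ⟨hS a b (hHv_le h), h.2.1⟩)
      have hu_mem : u ∈ S ∩ Ru := ⟨hS u v huv, Reachable.refl u⟩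
      have hv_mem : v ∈ S \ Ru := ⟨hS v u huv.symm, hbr⟩
      have hScard : S.ncard = (S ∩ Ru).ncard + (S \ Ru).ncard := by
        rw [← Set.ncard_union_eq (Set.disjoint_left.2 fun a h1 h2 => h2.2 h1.2)
          (Set.toFinite _) (Set.toFinite _), Set.inter_union_diff]
      have h1 := hua ⟨u, hu_mem⟩
      have h2 := hva ⟨v, hv_mem⟩
      constructor
      · intro _; omega
      · intro hcard a ha b hb
        have e1 : Hu.edgeSet.ncard + 1 = (S ∩ Ru).ncard := by omega
        have e2 : Hv.edgeSet.ncard + 1 = (S \ Ru).ncard := by omega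
        have reachu : ∀ a ∈ S ∩ Ru, ∀ b ∈ S ∩ Ru, H.Reachable a b :=
          fun a ha b hb => (hub e1 a ha b hb).mono hHu_le
        have reachv : ∀ a ∈ S \ Ru, ∀ b ∈ S \ Ru, H.Reachable a b :=
          fun a ha b hb => (hvb e2 a ha b hb).mono hHv_le
        by_cases hau : a ∈ Ru <;> by_cases hbu : b ∈ Ru
        · exact reachu a ⟨ha, hau⟩ b ⟨hb, hbu⟩
        · exact ((reachu a ⟨ha, hau⟩ u hu_mem).trans huv.reachable).trans
            (reachv v hv_mem b ⟨hb, hbu⟩)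
        · exact (((reachu b ⟨hb, hbu⟩ u hu_mem).trans huv.reachable).trans
            (reachv v hv_mem a ⟨ha, hau⟩)).symm
        · exact reachv a ⟨ha, hau⟩ b ⟨hb, hbu⟩

private lemma vine_finite {n : ℕ} (W : Vine n) (k : ℕ) (hk1 : 1 ≤ k) (hk2 : k ≤ n - 1) :
    (W.clusters k).Finite := by
  by_contra h
  have h2 := Set.Infinite.ncard (s := W.clusters k) h
  rw [W.ncard_clusters k hk1 hk2] at h2
  omega

private lemma vine_cover {n : ℕ} (W : Vine n) :
    ∀ k, 1 ≤ k → k ≤ n - 1 → ∀ x : Fin n, ∃ C ∈ W.clusters k, x ∈ C := by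
  intro k
  induction k with
  | zero => omega
  | succ k ihk =>
    intro h1 h2 x
    rcases Nat.eq_zero_or_pos k with rfl | hk
    · refine ⟨{x}, ?_, Finset.mem_singleton_self x⟩
      rw [W.clusters_one]
      exact ⟨x, rfl⟩
    · have hk2 : k ≤ n - 1 := by omega
      obtain ⟨C, hC, hxC⟩ := ihk hk hk2 x
      have hT := W.isTree k hk hk2
      have hfin : (W.clusters k).Finite := vine_finite W k hk hk2
      haveI : Finite ↥(W.clusters k) := hfin.to_subtype
      have hcard : Nat.card ↥(W.clusters k) = n - k + 1 := by
        rw [Nat.card_coe_set_eq, W.ncard_clusters k hk hk2]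
      haveI : Nontrivial ↥(W.clusters k) := by
        rw [← Finite.one_lt_card_iff_nontrivial, hcard]
        omega
      obtain ⟨C', hC'⟩ := exists_ne (⟨C, hC⟩ : ↥(W.clusters k))
      obtain ⟨w⟩ := hT.isConnected.preconnected ⟨C, hC⟩ C'
      have hadj : ∃ D : ↥(W.clusters k), W.adj k C D.1 := by
        cases w with
        | nil => exact absurd rfl hC'.symm
        | cons h _ => exact ⟨_, h⟩
      obtain ⟨D, hD⟩ := hadj
      refine ⟨C ∪ D.1, ?_, Finset.mem_union_left _ hxC⟩
      rw [W.clusters_succ (k + 1) (by omega) h2]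
      exact ⟨C, D.1, by simpa using hD, rfl⟩

private def xGraph {n : ℕ} (W : Vine n) (k : ℕ) (y : Fin n) :
    SimpleGraph ↥(W.clusters k) where
  Adj C D := (W.graph k).Adj C D ∧ y ∈ C.1 ∧ y ∈ D.1
  symm := ⟨fun C D h => ⟨h.1.symm, h.2.2, h.2.1⟩⟩
  loopless := ⟨fun C h => (W.graph k).loopless.irrefl C h.1⟩

private lemma xGraph_adj {n : ℕ} (W : Vine n) (k : ℕ) (y : Fin n)
    {C D : ↥(W.clusters k)} :
    (xGraph W k y).Adj C D ↔ (W.graph k).Adj C D ∧ y ∈ C.1 ∧ y ∈ D.1 := Iff.rfl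

private lemma xGraph_le {n : ℕ} (W : Vine n) (k : ℕ) (y : Fin n) :
    xGraph W k y ≤ W.graph k := fun _ _ h => h.1

private lemma walk_support_cases {V : Type*} {H : SimpleGraph V} :
    ∀ {a b : V} (w : H.Walk a b), ∀ C ∈ w.support, C = b ∨ ∃ D, H.Adj C D := by
  intro a b w
  induction w with
  | nil =>
    intro C hC
    rw [SimpleGraph.Walk.support_nil, List.mem_singleton] at hC
    exact Or.inl hC
  | cons h w' ih =>
    intro C hC
    rw [SimpleGraph.Walk.support_cons, List.mem_cons] at hC
    rcases hC with rfl | hC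
    · exact Or.inr ⟨_, h⟩
    · exact ih C hC

/-- Running intersection property of vines: for every tree `T_k` of a vine on `n ≥ 2`
variables, if two distinct clusters `A` and `B` of `T_k` both contain an element `x`,
then `x` is contained in every cluster on the path in `T_k` between `A` and `B`
(and hence in the intersection of every pair of consecutive clusters on that path). -/
theorem vine_running_intersection {n : ℕ} (hn : 2 ≤ n) (W : Vine n)
    (k : ℕ) (hk1 : 1 ≤ k) (hk2 : k ≤ n - 1)
    (A B : W.clusters k) (hAB : A ≠ B) (x : Fin n) (hxA : x ∈ A.1) (hxB : x ∈ B.1)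
    (p : (W.graph k).Walk A B) (hp : p.IsPath) :
    (∀ C ∈ p.support, x ∈ C.1) ∧
      (∀ C D : W.clusters k, s(C, D) ∈ p.edges → x ∈ C.1 ∩ D.1) := by
  classical
  have hT : (W.graph k).IsTree := W.isTree k hk1 hk2
  have hfin : (W.clusters k).Finite := vine_finite W k hk1 hk2
  haveI : Fintype ↥(W.clusters k) := hfin.fintype
  have hcardV : Fintype.card ↥(W.clusters k) = n - k + 1 := by
    rw [← Nat.card_eq_fintype_card, Nat.card_coe_set_eq, W.ncard_clusters k hk1 hk2]
  have hEcard : (W.graph k).edgeFinset.card = n - k := by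
    have h1 := hT.card_edgeFinset
    rw [hcardV] at h1
    omega
  set m : Fin n → ℕ :=
    fun y => (Finset.univ.filter fun C : ↥(W.clusters k) => y ∈ C.1).card with hm
  set e : Fin n → ℕ :=
    fun y => ((W.graph k).edgeFinset.filter fun ed => ∀ C ∈ ed, y ∈ C.1).card with he
  -- edge set of xGraph
  have hHE : ∀ y : Fin n, (xGraph W k y).edgeSet =
      ↑((W.graph k).edgeFinset.filter fun ed => ∀ C ∈ ed, y ∈ C.1) := by
    intro y
    ext ed
    induction ed using Sym2.ind with
    | _ C D =>
      simp only [SimpleGraph.mem_edgeSet, xGraph_adj, Finset.mem_coe, Finset.mem_filter,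
        SimpleGraph.mem_edgeFinset, Sym2.mem_iff]
      constructor
      · rintro ⟨h1, h2, h3⟩
        refine ⟨h1, ?_⟩
        rintro E (rfl | rfl) <;> assumption
      · rintro ⟨h1, h2⟩
        exact ⟨h1, h2 C (Or.inl rfl), h2 D (Or.inr rfl)⟩
  have he_ncard : ∀ y : Fin n, (xGraph W k y).edgeSet.ncard = e y := by
    intro y
    rw [hHE y, Set.ncard_coe_finset]
  -- sum of m
  have hsum_m : ∑ y : Fin n, m y = k * (n - k + 1) := by
    calc ∑ y : Fin n, m y
        = ∑ y : Fin n, ∑ C : ↥(W.clusters k), if y ∈ C.1 then 1 else 0 :=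
          Finset.sum_congr rfl fun y _ => Finset.card_filter _ _
      _ = ∑ C : ↥(W.clusters k), ∑ y : Fin n, if y ∈ C.1 then 1 else 0 :=
          Finset.sum_comm
      _ = ∑ C : ↥(W.clusters k), (Finset.univ.filter fun y : Fin n => y ∈ C.1).card := by
          simp [Finset.card_filter]
      _ = ∑ C : ↥(W.clusters k), k := by
          refine Finset.sum_congr rfl fun C _ => ?_
          rw [Finset.filter_univ_mem]
          exact W.card_of_mem_clusters k hk1 hk2 C.1 C.2
      _ = k * (n - k + 1) := by
          rw [Finset.sum_const, Finset.card_univ, hcardV, smul_eq_mul, Nat.mul_comm]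
  -- sum of e
  have key : ∀ (C D : ↥(W.clusters k)), s(C, D) ∈ (W.graph k).edgeFinset →
      (Finset.univ.filter fun y : Fin n => ∀ E ∈ s(C, D), y ∈ E.1).card = k - 1 := by
    intro C D hed
    have hadj : (W.graph k).Adj C D := SimpleGraph.mem_edgeFinset.1 hed
    have hfil : (Finset.univ.filter fun y : Fin n => ∀ E ∈ s(C, D), y ∈ E.1)
        = C.1 ∩ D.1 := by
      ext y
      simp only [Finset.mem_filter, Finset.mem_univ, true_and, Sym2.mem_iff,
        Finset.mem_inter]
      constructor
      · intro h; exact ⟨h C (Or.inl rfl), h D (Or.inr rfl)⟩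
      · rintro ⟨h1, h2⟩ E (rfl | rfl) <;> assumption
    rw [hfil]
    exact W.card_inter_of_adj k hk1 hk2 C.1 D.1 hadj
  have hsum_e : ∑ y : Fin n, e y = (n - k) * (k - 1) := by
    calc ∑ y : Fin n, e y
        = ∑ y : Fin n, ∑ ed ∈ (W.graph k).edgeFinset, if (∀ C ∈ ed, y ∈ C.1) then 1 else 0 :=
          Finset.sum_congr rfl fun y _ => Finset.card_filter _ _
      _ = ∑ ed ∈ (W.graph k).edgeFinset, ∑ y : Fin n, if (∀ C ∈ ed, y ∈ C.1) then 1 else 0 :=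
          Finset.sum_comm
      _ = ∑ ed ∈ (W.graph k).edgeFinset, (Finset.univ.filter fun y : Fin n => ∀ C ∈ ed, y ∈ C.1).card :=
          Finset.sum_congr rfl fun ed _ => (Finset.card_filter _ _).symm
      _ = ∑ ed ∈ (W.graph k).edgeFinset, (k - 1) := by
          refine Finset.sum_congr rfl fun ed hed => ?_
          exact Sym2.ind key ed hed
      _ = (n - k) * (k - 1) := by
          rw [Finset.sum_const, hEcard, smul_eq_mul]
  -- coverage : m y ≥ 1
  have hSne : ∀ y : Fin n,
      ((Finset.univ.filter fun C : ↥(W.clusters k) => y ∈ C.1) : Set ↥(W.clusters k)).Nonempty := by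
    intro y
    obtain ⟨C, hC, hyC⟩ := vine_cover W k hk1 hk2 y
    exact ⟨⟨C, hC⟩, by simp [hyC]⟩
  -- forest bound
  have hfb := fun y : Fin n =>
    forest_bound (e y) (xGraph W k y) (he_ncard y)
      (acyclic_of_le (xGraph_le W k y) hT.IsAcyclic)
      (↑(Finset.univ.filter fun C : ↥(W.clusters k) => y ∈ C.1))
      (fun a b h => Finset.mem_coe.2 (Finset.mem_filter.2 ⟨Finset.mem_univ _, h.2.1⟩))
  have hS_ncard : ∀ y : Fin n,
      ((Finset.univ.filter fun C : ↥(W.clusters k) => y ∈ C.1) : Set ↥(W.clusters k)).ncard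
        = m y := fun y => Set.ncard_coe_finset _
  have hle_all : ∀ y : Fin n, e y + 1 ≤ m y := by
    intro y
    have := (hfb y).1 (hSne y)
    rwa [he_ncard y, hS_ncard y] at this
  have htot : ∑ y : Fin n, (e y + 1) = ∑ y : Fin n, m y := by
    rw [Finset.sum_add_distrib, hsum_e, hsum_m]
    simp only [Finset.sum_const, Finset.card_univ, Fintype.card_fin, smul_eq_mul, mul_one]
    obtain ⟨k', rfl⟩ : ∃ k', k = 1 + k' := ⟨k - 1, by omega⟩
    obtain ⟨a, ha⟩ : ∃ a, n = 1 + k' + a := ⟨n - (1 + k'), by omega⟩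
    subst ha
    simp only [Nat.add_sub_cancel_left, Nat.add_sub_cancel]
    ring
  have heq_all : ∀ y : Fin n, e y + 1 = m y := by
    have h := (Finset.sum_eq_sum_iff_of_le (fun i _ => hle_all i)).1 htot
    exact fun y => h y (Finset.mem_univ y)
  -- reachability for our x
  have hreach : (xGraph W k x).Reachable A B := by
    have h := (hfb x).2 (by rw [he_ncard x, hS_ncard x]; exact heq_all x)
    exact h A (Finset.mem_coe.2 (Finset.mem_filter.2 ⟨Finset.mem_univ _, hxA⟩))
      B (Finset.mem_coe.2 (Finset.mem_filter.2 ⟨Finset.mem_univ _, hxB⟩))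
  obtain ⟨w⟩ := hreach
  have hedges : ∀ ed ∈ w.edges, ed ∈ (W.graph k).edgeSet := fun ed hed =>
    SimpleGraph.edgeSet_mono (xGraph_le W k x) (w.edges_subset_edgeSet hed)
  set q := w.transfer (W.graph k) hedges with hq
  have hpq : p = (q.toPath : (W.graph k).Walk A B) := by
    have := hT.IsAcyclic.path_unique ⟨p, hp⟩ q.toPath
    exact congrArg Subtype.val this
  have hsupp : ∀ C ∈ p.support, x ∈ C.1 := by
    intro C hC
    rw [hpq] at hC
    have h1 : C ∈ q.support := q.support_toPath_subset hC
    rw [hq, SimpleGraph.Walk.support_transfer] at h1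
    rcases walk_support_cases w C h1 with rfl | ⟨D, hD⟩
    · exact hxB
    · exact hD.2.1
  refine ⟨hsupp, fun C D hCD => ?_⟩
  exact Finset.mem_inter.2 ⟨hsupp C (p.fst_mem_support_of_mem_edges hCD),
    hsupp D (p.snd_mem_support_of_mem_edges hCD)⟩
end

section
/- Let T be a k-th order cherry tree, i.e., a tree whose nodes ('clusters') are k-element finite sets, in which the separator A ∩ B of any edge {A,B} has exactly k−1 elements, and which satisfies the running intersection property: any element contained in two clusters is contained in every cluster on the path between them. Then the graph G whose vertex set is the union of all clusters and in which two distinct vertices are adjacent if and only if they lie together in some cluster, is a chordal graph. -/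
/-- The graph associated to a family of clusters `C : ι → Finset α`: its vertex set is
the union of all clusters, and two distinct vertices are adjacent if and only if they
lie together in some cluster. -/
def cherryGraph {α ι : Type*} (C : ι → Finset α) :
    SimpleGraph {a : α // ∃ i, a ∈ C i} where
  Adj x y := x ≠ y ∧ ∃ i, x.1 ∈ C i ∧ y.1 ∈ C i
  symm := by
    constructor
    rintro x y ⟨hne, i, hx, hy⟩
    exact ⟨hne.symm, i, hy, hx⟩
  loopless := ⟨fun x h => h.1 rfl⟩

open SimpleGraph Walk
open Fin.CommRing


lemma tree_path_length {ι : Type*} [DecidableEq ι] {T : SimpleGraph ι} (hT : T.IsTree) {x y : ι}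
    (q : T.Walk x y) (hq : q.IsPath) : q.length = T.dist x y := by
  obtain ⟨w, hw⟩ := (hT.isConnected.preconnected x y).exists_walk_length_eq_dist
  have h1 : w.bypass = q := (hT.existsUnique_path x y).unique w.bypass_isPath hq
  have h2 := SimpleGraph.Walk.length_bypass_le w
  have h3 := SimpleGraph.dist_le q
  have h4 : w.bypass.length = q.length := by rw [h1]
  omega

lemma tree_dist_split {ι : Type*} [DecidableEq ι] {T : SimpleGraph ι} (hT : T.IsTree) {x y z : ι}
    (q : T.Walk x y) (hq : q.IsPath) (hz : z ∈ q.support) :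
    T.dist x z + T.dist z y = T.dist x y := by
  rw [← tree_path_length hT q hq,
    ← tree_path_length hT _ (hq.takeUntil hz),
    ← tree_path_length hT _ (hq.dropUntil hz),
    ← Walk.length_append, Walk.take_spec]

lemma cross_lemma {ι : Type*} [DecidableEq ι] {T : SimpleGraph ι} (hT : T.IsTree) {a b x y : ι}
    (hab : T.Adj a b)
    (q1 : T.Walk a x) (hq1 : q1.IsPath) (hx : b ∈ q1.support)
    (q2 : T.Walk a y) (hq2 : q2.IsPath) (hy : b ∉ q2.support) :
    ∃ w : T.Walk x y, w.IsPath ∧ a ∈ w.support ∧ b ∈ w.support := by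
  set r := q1.dropUntil b hx with hr_def
  have hr : r.IsPath := hq1.dropUntil hx
  have ha_r : a ∉ r.support := by
    intro ha
    have hnodup : q1.support.Nodup := hq1.support_nodup
    rw [← q1.take_spec hx, Walk.support_append] at hnodup
    have hdisj := List.disjoint_of_nodup_append hnodup
    have ha_take : a ∈ (q1.takeUntil b hx).support := Walk.start_mem_support _
    have hcons : a ∈ b :: r.support.tail := by
      rw [← r.support_eq_cons]; exact ha
    rcases List.mem_cons.mp hcons with h | h
    · exact hab.ne h
    · exact hdisj ha_take h
  have hdisj2 : ∀ z, z ∈ r.support → z ∈ q2.support → False := by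
    intro z hz1 hz2
    have hp1 : (Walk.cons hab (r.takeUntil z hz1)).IsPath := by
      rw [Walk.cons_isPath_iff]
      exact ⟨hr.takeUntil hz1, fun h => ha_r (Walk.support_takeUntil_subset _ hz1 h)⟩
    have hb1 : b ∈ (Walk.cons hab (r.takeUntil z hz1)).support := by
      rw [Walk.support_cons]
      exact List.mem_cons_of_mem _ (Walk.start_mem_support _)
    have hp2 : (q2.takeUntil z hz2).IsPath := hq2.takeUntil hz2
    have hb2 : b ∉ (q2.takeUntil z hz2).support :=
      fun h => hy (Walk.support_takeUntil_subset _ hz2 h)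
    have heq := (hT.existsUnique_path a z).unique hp1 hp2
    rw [heq] at hb1
    exact hb2 hb1
  refine ⟨r.reverse.append (Walk.cons hab.symm q2), ?_, ?_, ?_⟩
  · rw [Walk.isPath_def, Walk.support_append, Walk.support_reverse, Walk.support_cons,
      List.tail_cons]
    exact List.Nodup.append (List.nodup_reverse.mpr hr.support_nodup) hq2.support_nodup
      (fun z hz1 hz2 => hdisj2 z (List.mem_reverse.mp hz1) hz2)
  · rw [Walk.support_append, Walk.support_cons, List.tail_cons]
    exact List.mem_append_right _ (Walk.start_mem_support _)
  · rw [Walk.support_append, Walk.support_cons, List.tail_cons]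
    refine List.mem_append_left _ ?_
    rw [Walk.support_reverse, List.mem_reverse]
    exact Walk.start_mem_support _

lemma cherryGraph_adj {α ι : Type*} (C : ι → Finset α) (x y : {a : α // ∃ i, a ∈ C i}) :
    (cherryGraph C).Adj x y ↔ x ≠ y ∧ ∃ i, x.1 ∈ C i ∧ y.1 ∈ C i := Iff.rfl

/-- Let `T` (a finite tree with node set `ι` and clusters `C i`) be a `k`-th order
cherry tree: all clusters have `k` elements, the separator of every edge has `k - 1`
elements, and the running intersection property holds. Then the graph whose vertex set
is the union of all clusters, in which two distinct vertices are adjacent iff they lie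
together in some cluster, is chordal. -/

theorem cherryTree_cherryGraph_isChordal {α ι : Type*} [DecidableEq α] [Fintype ι]
    (T : SimpleGraph ι) (hT : T.IsTree) (k : ℕ) (C : ι → Finset α)
    (hcard : ∀ i, (C i).card = k)
    (hsep : ∀ i j, T.Adj i j → (C i ∩ C j).card = k - 1)
    (hrip : ∀ (a : α) (i j : ι), a ∈ C i → a ∈ C j →
      ∀ p : T.Walk i j, p.IsPath → ∀ l ∈ p.support, a ∈ C l) :
    (cherryGraph C).IsChordal := by
  intro n hn
  obtain ⟨m, rfl⟩ : ∃ m, n = m + 4 := ⟨n - 4, by omega⟩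
  refine ⟨fun f => ?_⟩
  classical
  have hpex : ∀ x y : ι, ∃ p : T.Walk x y, p.IsPath :=
    fun x y => (hT.existsUnique_path x y).exists
  choose pth hpth using hpex
  have hfin : ∀ k : ℕ, 0 < k → k < m + 4 → ((k : ℕ) : Fin (m + 4)) ≠ 0 := by
    intro k hk1 hk2 h
    rw [Fin.natCast_eq_zero] at h
    exact absurd (Nat.le_of_dvd hk1 h) (by omega)
  have h1 : (1 : Fin (m + 4)) ≠ 0 := by
    have := hfin 1 (by omega) (by omega); simpa using this
  have h2 : (2 : Fin (m + 4)) ≠ 0 := by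
    have := hfin 2 (by omega) (by omega); simpa using this
  have h3 : (3 : Fin (m + 4)) ≠ 0 := by
    have := hfin 3 (by omega) (by omega); simpa using this
  have hval1 : (1 : Fin (m + 4)).val = 1 := by simp
  have hkey : ∀ (i j : Fin (m + 4)) (c : ι), (f i).1 ∈ C c → (f j).1 ∈ C c →
      i = j ∨ i = j + 1 ∨ j = i + 1 := by
    intro i j c hi hj
    by_cases h : f i = f j
    · exact Or.inl (f.injective h)
    · have hadj : (cherryGraph C).Adj (f i) (f j) := ⟨h, c, hi, hj⟩
      have hcyc := f.map_rel_iff.mp hadj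
      rw [SimpleGraph.cycleGraph_adj'] at hcyc
      rcases hcyc with h' | h'
      · have hij : i - j = 1 := Fin.ext (by rw [hval1]; exact h')
        exact Or.inr (Or.inl (by linear_combination hij))
      · have hij : j - i = 1 := Fin.ext (by rw [hval1]; exact h')
        exact Or.inr (Or.inr (by linear_combination hij))
  have hconsec : ∀ i : Fin (m + 4), ∃ c, (f i).1 ∈ C c ∧ (f (i + 1)).1 ∈ C c := by
    intro i
    have hadj : (SimpleGraph.cycleGraph (m + 4)).Adj i (i + 1) := by
      rw [SimpleGraph.cycleGraph_adj']
      right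
      rw [add_sub_cancel_left]
      exact hval1
    obtain ⟨-, c, hc⟩ := f.map_rel_iff.mpr hadj
    exact ⟨c, hc⟩
  set P : (Fin (m + 4) → ι) → Prop :=
    fun t => ∀ i, (f i).1 ∈ C (t i) ∧ (f (i + 1)).1 ∈ C (t i) with hPdef
  choose t0 ht0a ht0b using hconsec
  obtain ⟨t, htmem, hmin⟩ := Finset.exists_min_image (Finset.univ.filter P)
    (fun t => ∑ i : Fin (m + 4), T.dist (t i) (t (i + 1)))
    ⟨t0, Finset.mem_filter.mpr ⟨Finset.mem_univ _, fun i => ⟨ht0a i, ht0b i⟩⟩⟩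
  have htP : P t := (Finset.mem_filter.mp htmem).2
  by_cases hconst : ∀ j : Fin (m + 4), t j = t (j + 1)
  · have hc : ∀ d : ℕ, t ((d : ℕ) : Fin (m + 4)) = t 0 := by
      intro d
      induction d with
      | zero => norm_num
      | succ d ih => rw [Nat.cast_succ, ← hconst, ih]
    have hall : ∀ i : Fin (m + 4), t i = t 0 := fun i => by
      have := hc i.val
      rwa [Fin.cast_val_eq_self] at this
    have hf0 : (f 0).1 ∈ C (t 0) := (htP 0).1
    have hf2 : (f (1 + 1)).1 ∈ C (t 0) := by
      have := (htP 1).2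
      rwa [hall 1] at this
    rcases hkey 0 (1 + 1) (t 0) hf0 hf2 with h | h | h
    · exact h2 (by linear_combination -h)
    · exact h3 (by linear_combination -h)
    · exact h1 (by linear_combination h)
  · push_neg at hconst
    obtain ⟨j, hj⟩ := hconst
    obtain ⟨b, hab, q, hpq⟩ := Walk.exists_eq_cons_of_ne hj (pth (t j) (t (j + 1)))
    have hbp : b ∈ (pth (t j) (t (j + 1))).support := by
      rw [hpq, Walk.support_cons]
      exact List.mem_cons_of_mem _ (Walk.start_mem_support _)
    set B : ι → Prop := fun x => b ∈ (pth (t j) x).support with hB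
    have hBa : ¬ B (t j) := by
      have hnil : pth (t j) (t j) = Walk.nil :=
        (hT.existsUnique_path _ _).unique (hpth _ _) Walk.IsPath.nil
      intro hcon
      rw [hB] at hcon
      simp only [hnil, Walk.support_nil, List.mem_singleton] at hcon
      exact hab.ne hcon.symm
    have hBj1 : B (t (j + 1)) := hbp
    have hvj1b : (f (j + 1)).1 ∈ C b :=
      hrip _ _ _ (htP j).2 (htP (j + 1)).1 (pth (t j) (t (j + 1))) (hpth _ _) b hbp
    have hcast4 : ((m + 4 : ℕ) : Fin (m + 4)) = 0 := Fin.natCast_self _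
    have hw3 : 1 ≤ m + 3 ∧ ¬ B (t (j + 1 + ((m + 3 : ℕ) : Fin (m + 4)))) := by
      refine ⟨by omega, ?_⟩
      have heq : j + 1 + ((m + 3 : ℕ) : Fin (m + 4)) = j := by
        push_cast at hcast4 ⊢
        linear_combination hcast4
      rw [heq]
      exact hBa
    have hex : ∃ e : ℕ, 1 ≤ e ∧ ¬ B (t (j + 1 + (e : Fin (m + 4)))) := ⟨m + 3, hw3⟩
    set M := Nat.find hex with hM_def
    have hM := Nat.find_spec hex
    have hM_le : M ≤ m + 3 := Nat.find_min' hex hw3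
    have hcastM : ((M : ℕ) : Fin (m + 4)) = ((M - 1 : ℕ) : Fin (m + 4)) + 1 := by
      conv_lhs => rw [show M = (M - 1) + 1 by omega]
      rw [Nat.cast_succ]
    set i := j + 1 + ((M - 1 : ℕ) : Fin (m + 4)) with hi_def
    have hiB : B (t i) := by
      rcases Nat.eq_or_lt_of_le hM.1 with h | h
      · have hM1 : M - 1 = 0 := by omega
        have hieq : i = j + 1 := by rw [hi_def, hM1]; norm_num
        rw [hieq]
        exact hBj1
      · have hfm := Nat.find_min hex (show M - 1 < Nat.find hex by omega)
        push_neg at hfm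
        rw [hi_def]
        exact hfm (by omega)
    have hiB1 : ¬ B (t (i + 1)) := by
      have : i + 1 = j + 1 + ((M : ℕ) : Fin (m + 4)) := by
        rw [hi_def, hcastM]; ring
      rw [this]
      exact hM.2
    have hij : i ≠ j := by
      intro h
      rw [hi_def] at h
      have hM0 : ((M : ℕ) : Fin (m + 4)) = 0 := by
        rw [hcastM]; linear_combination h
      rw [Fin.natCast_eq_zero] at hM0
      have := Nat.le_of_dvd (by omega) hM0
      omega
    obtain ⟨w, hw, haw, hbw⟩ := cross_lemma hT hab (pth (t j) (t i)) (hpth _ _) hiB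
      (pth (t j) (t (i + 1))) (hpth _ _) hiB1
    have hvi1a : (f (i + 1)).1 ∈ C (t j) :=
      hrip _ _ _ (htP i).2 (htP (i + 1)).1 w hw _ haw
    have hvi1b : (f (i + 1)).1 ∈ C b :=
      hrip _ _ _ (htP i).2 (htP (i + 1)).1 w hw _ hbw
    rcases hkey (i + 1) (j + 1) b hvi1b hvj1b with h | h | h
    · exact hij (by linear_combination h)
    · -- i = j + 1 : outright contradiction
      have hi_eq : i = j + 1 := by linear_combination h
      have hvj2 : (f (j + 1 + 1)).1 ∈ C (t j) := by rw [← hi_eq]; exact hvi1a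
      rcases hkey j (j + 1 + 1) (t j) (htP j).1 hvj2 with h' | h' | h'
      · exact h2 (by linear_combination -h')
      · exact h3 (by linear_combination -h')
      · exact h1 (by linear_combination h')
    · -- j = i + 1 : improve the minimizer
      have hj_eq : j = i + 1 := by linear_combination h
      have hfj : (f j).1 ∈ C b := by rw [hj_eq]; exact hvi1b
      set t' := Function.update t j b with ht'
      have hPt' : P t' := by
        intro i'
        by_cases hi' : i' = j
        · rw [hi', ht', Function.update_self]
          exact ⟨hfj, hvj1b⟩
        · rw [ht', Function.update_of_ne hi']
          exact htP i'
      have hd1 : T.dist (t j) b = 1 := SimpleGraph.dist_eq_one_iff_adj.mpr hab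
      have hdb : T.dist b (t j) = 1 := SimpleGraph.dist_eq_one_iff_adj.mpr hab.symm
      have hs1 : T.dist (t j) b + T.dist b (t (j + 1)) = T.dist (t j) (t (j + 1)) :=
        tree_dist_split hT (pth (t j) (t (j + 1))) (hpth _ _) hbp
      have hs2 : T.dist (t i) b + T.dist b (t (i + 1)) = T.dist (t i) (t (i + 1)) :=
        tree_dist_split hT w hw hbw
      have hj1j : j + 1 ≠ j := fun hcon => h1 (by linear_combination hcon)
      have ht'j : t' j = b := by rw [ht', Function.update_self]
      have ht'ne : ∀ x, x ≠ j → t' x = t x := fun x hx => by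
        rw [ht', Function.update_of_ne hx]
      have ht'i1 : t' (i + 1) = b := by
        rw [show i + 1 = j from hj_eq.symm]
        exact ht'j
      have e3 : T.dist b (t (i + 1)) = 1 := by rw [← hj_eq]; exact hdb
      have hlt : ∑ i' : Fin (m + 4), T.dist (t' i') (t' (i' + 1)) <
          ∑ i' : Fin (m + 4), T.dist (t i') (t (i' + 1)) := by
        apply Finset.sum_lt_sum
        · intro i' _
          by_cases hij1 : i' = j
          · rw [hij1, ht'j, ht'ne _ hj1j]
            omega
          · by_cases hij2 : i' = i
            · rw [hij2, ht'i1, ht'ne _ hij]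
              omega
            · have hne : i' + 1 ≠ j := fun hcon => hij2 (by linear_combination hcon + hj_eq)
              rw [ht'ne _ hij1, ht'ne _ hne]
        · refine ⟨i, Finset.mem_univ _, ?_⟩
          rw [ht'i1, ht'ne _ hij]
          omega
      have hge := hmin t' (Finset.mem_filter.mpr ⟨Finset.mem_univ _, hPt'⟩)
      exact lt_irrefl _ (lt_of_le_of_lt hge hlt)
end

section
/- Let (T_1,…,T_{n−1}) be a vine on n ≥ 2 variables. Then there exists an ordering r_1,…,r_n of {1,…,n} that is simultaneously a perfect elimination ordering of the chordal graph representation of every tree T_1,…,T_{n−1}. -/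
/-- The chordal graph representation of the tree `T_k` of a vine: the simple graph on
the variables in which two distinct variables are adjacent if and only if some cluster
of `T_k` contains both. -/
def Vine.repGraph {n : ℕ} (W : Vine n) (k : ℕ) : SimpleGraph (Fin n) where
  Adj x y := x ≠ y ∧ ∃ A ∈ W.clusters k, x ∈ A ∧ y ∈ A
  symm := by
    constructor
    rintro x y ⟨hne, A, hA, hx, hy⟩
    exact ⟨hne.symm, A, hA, hy, hx⟩
  loopless := ⟨fun x h => h.1 rfl⟩

/-- `σ` (listing the vertices as `σ 0, σ 1, …`) is a *perfect elimination ordering* of a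
graph `G` on `Fin n`: for every `i`, the neighbours of `σ i` among the later vertices
`σ j`, `j > i`, form a clique in `G`. -/
def IsPerfectEliminationOrdering {n : ℕ} (G : SimpleGraph (Fin n))
    (σ : Fin n ≃ Fin n) : Prop :=
  ∀ i : Fin n, G.IsClique {v | G.Adj (σ i) v ∧ ∃ j : Fin n, i < j ∧ σ j = v}

/-- Auxiliary structure: a vine on an arbitrary subset `V` of the variables `Fin N`,
with the tree conditions weakened to exactly what is needed for the induction. -/
structure VineAux (N : ℕ) (V : Finset (Fin N)) where
  clusters : ℕ → Set (Finset (Fin N))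
  adj : ℕ → Finset (Fin N) → Finset (Fin N) → Prop
  adj_symm : ∀ k A B, adj k A B → adj k B A
  adj_ne : ∀ k A B, adj k A B → A ≠ B
  adj_mem : ∀ k A B, adj k A B → A ∈ clusters k ∧ B ∈ clusters k
  subset_of_mem : ∀ k, 1 ≤ k → k ≤ V.card - 1 → ∀ A ∈ clusters k, A ⊆ V
  card_of_mem : ∀ k, 1 ≤ k → k ≤ V.card - 1 → ∀ A ∈ clusters k, A.card = k
  ncard_clusters : ∀ k, 1 ≤ k → k ≤ V.card - 1 → (clusters k).ncard = V.card - k + 1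
  clusters_one : clusters 1 = {C | ∃ i ∈ V, C = {i}}
  clusters_succ : ∀ k, 2 ≤ k → k ≤ V.card - 1 →
    clusters k = {C | ∃ A B, adj (k - 1) A B ∧ C = A ∪ B}
  card_inter : ∀ k, 1 ≤ k → k ≤ V.card - 1 → ∀ A B, adj k A B → (A ∩ B).card = k - 1
  conn : ∀ k, 1 ≤ k → k ≤ V.card - 1 → ∀ A ∈ clusters k, ∀ B ∈ clusters k,
    Relation.ReflTransGen (adj k) A B
  inj : ∀ k, 1 ≤ k → k ≤ V.card - 2 → ∀ A B A' B', adj k A B → adj k A' B' →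
    A ∪ B = A' ∪ B' → (A = A' ∧ B = B') ∨ (A = B' ∧ B = A')

namespace VineAux

variable {N : ℕ} {V : Finset (Fin N)}

def Rel (W : VineAux N V) (k : ℕ) (x y : Fin N) : Prop :=
  x ≠ y ∧ ∃ A ∈ W.clusters k, x ∈ A ∧ y ∈ A

lemma exists_leaf (W : VineAux N V) (h2 : 2 ≤ V.card) :
    ∃ v ∈ V,
      (∃! C, C ∈ W.clusters (V.card - 1) ∧ v ∈ C) ∧
      ∃ B ∈ W.clusters (V.card - 1), ∀ x ∈ V, x ≠ v → x ∈ B := by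
  have hm1 : 1 ≤ V.card - 1 := by omega
  have hA2 : (W.clusters (V.card - 1)).ncard = 2 := by
    rw [W.ncard_clusters _ hm1 le_rfl]; omega
  obtain ⟨A, B, hABne, hset⟩ := Set.ncard_eq_two.mp hA2
  have hAmem : A ∈ W.clusters (V.card - 1) := by rw [hset]; left; rfl
  have hBmem : B ∈ W.clusters (V.card - 1) := by rw [hset]; right; rfl
  have hadjAB : W.adj (V.card - 1) A B := by
    rcases (W.conn _ hm1 le_rfl A hAmem B hBmem).cases_head with h | ⟨c, hac, _⟩
    · exact absurd h hABne
    · have hc : c ∈ W.clusters (V.card - 1) := (W.adj_mem _ _ _ hac).2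
      rw [hset] at hc
      rcases hc with rfl | rfl
      · exact absurd rfl (W.adj_ne _ _ _ hac)
      · exact hac
  have hcA : A.card = V.card - 1 := W.card_of_mem _ hm1 le_rfl A hAmem
  have hcB : B.card = V.card - 1 := W.card_of_mem _ hm1 le_rfl B hBmem
  have hint : (A ∩ B).card = V.card - 1 - 1 := W.card_inter _ hm1 le_rfl A B hadjAB
  have hsubA : A ⊆ V := W.subset_of_mem _ hm1 le_rfl A hAmem
  have hsubB : B ⊆ V := W.subset_of_mem _ hm1 le_rfl B hBmem
  have hcardU : (A ∪ B).card + (A ∩ B).card = A.card + B.card :=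
    Finset.card_union_add_card_inter A B
  have hunion : A ∪ B = V := by
    apply Finset.eq_of_subset_of_card_le (Finset.union_subset hsubA hsubB)
    omega
  have hsd : (A \ B).card = 1 := by
    have := Finset.card_inter_add_card_sdiff A B
    omega
  obtain ⟨v, hvImp⟩ := Finset.card_eq_one.mp hsd
  have hv : v ∈ A \ B := by rw [hvImp]; exact Finset.mem_singleton_self v
  have hvA : v ∈ A := (Finset.mem_sdiff.mp hv).1
  have hvB : v ∉ B := (Finset.mem_sdiff.mp hv).2
  refine ⟨v, hsubA hvA, ⟨A, ⟨hAmem, hvA⟩, ?_⟩, B, hBmem, ?_⟩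
  · rintro C ⟨hC, hvC⟩
    rw [hset] at hC
    rcases hC with rfl | rfl
    · rfl
    · exact absurd hvC hvB
  · intro x hxV hxv
    have hx : x ∈ A ∪ B := hunion ▸ hxV
    rcases Finset.mem_union.mp hx with hxA | hxB
    · by_contra hxB
      have : x ∈ A \ B := Finset.mem_sdiff.mpr ⟨hxA, hxB⟩
      rw [hvImp] at this
      exact hxv (Finset.mem_singleton.mp this)
    · exact hxB

lemma step (W : VineAux N V) {v : Fin N} (k : ℕ) (hk1 : 1 ≤ k) (hk2 : k ≤ V.card - 2)
    (h : ∃! C, C ∈ W.clusters (k + 1) ∧ v ∈ C) : ∃! C, C ∈ W.clusters k ∧ v ∈ C := by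
  have hm3 : 3 ≤ V.card := by omega
  have hsucc := W.clusters_succ (k + 1) (by omega) (by omega)
  simp only [Nat.add_sub_cancel] at hsucc
  obtain ⟨D, ⟨hD, hvD⟩, hDu⟩ := h
  have hDrep : ∃ A B, W.adj k A B ∧ D = A ∪ B := by rw [hsucc] at hD; exact hD
  obtain ⟨A, B, hadj, hDeq⟩ := hDrep
  have key : ∀ R X, v ∈ R → W.adj k R X → R ∪ X = D := by
    intro R X hvR hadjRX
    have hmem : R ∪ X ∈ W.clusters (k + 1) := by
      rw [hsucc]; exact ⟨R, X, hadjRX, rfl⟩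
    exact hDu _ ⟨hmem, Finset.mem_union_left _ hvR⟩
  have hex : ∃ C, C ∈ W.clusters k ∧ v ∈ C := by
    rcases Finset.mem_union.mp (hDeq ▸ hvD) with hvA | hvB
    · exact ⟨A, (W.adj_mem _ _ _ hadj).1, hvA⟩
    · exact ⟨B, (W.adj_mem _ _ _ hadj).2, hvB⟩
  have hun : ∀ P Q : Finset (Fin N), P ∈ W.clusters k ∧ v ∈ P → Q ∈ W.clusters k ∧ v ∈ Q →
      P = Q := by
    rintro P Q ⟨hP, hvP⟩ ⟨hQ, hvQ⟩
    by_contra hPQ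
    have hnbr : ∀ R X, R ∈ W.clusters k → v ∈ R → W.adj k R X → ∀ S Y, v ∈ S → R ≠ S →
        W.adj k S Y → X = S := by
      intro R X hR hvR hRX S Y hvS hRS hSY
      rcases W.inj k hk1 hk2 R X S Y hRX hSY ((key R X hvR hRX).trans (key S Y hvS hSY).symm) with
        ⟨h1, _⟩ | ⟨_, h2⟩
      · exact absurd h1 hRS
      · exact h2
    obtain ⟨XP, hXP⟩ : ∃ X, W.adj k P X := by
      rcases (W.conn k hk1 (by omega) P hP Q hQ).cases_head with h | ⟨c, hc, _⟩
      · exact absurd h hPQ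
      · exact ⟨c, hc⟩
    obtain ⟨XQ, hXQ⟩ : ∃ X, W.adj k Q X := by
      rcases (W.conn k hk1 (by omega) Q hQ P hP).cases_head with h | ⟨c, hc, _⟩
      · exact absurd h (Ne.symm hPQ)
      · exact ⟨c, hc⟩
    have hnbrP : ∀ X, W.adj k P X → X = Q := by
      intro X hX; exact hnbr P X hP hvP hX Q XQ hvQ hPQ hXQ
    have hnbrQ : ∀ X, W.adj k Q X → X = P := by
      intro X hX; exact hnbr Q X hQ hvQ hX P XP hvP (Ne.symm hPQ) hXP
    have hthird : ∃ R ∈ W.clusters k, R ≠ P ∧ R ≠ Q := by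
      by_contra hcon
      push_neg at hcon
      have hsub : W.clusters k ⊆ {P, Q} := by
        intro R hR
        by_cases h : R = P
        · exact Or.inl h
        · exact Or.inr (hcon R hR h)
      have h1 : (W.clusters k).ncard ≤ ({P, Q} : Set (Finset (Fin N))).ncard :=
        Set.ncard_le_ncard hsub (Set.toFinite _)
      rw [Set.ncard_pair hPQ] at h1
      rw [W.ncard_clusters k hk1 (by omega)] at h1
      omega
    obtain ⟨R, hR, hRP, hRQ⟩ := hthird
    have hclosed : ∀ X, Relation.ReflTransGen (W.adj k) P X → X = P ∨ X = Q := by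
      intro X h
      induction h with
      | refl => exact Or.inl rfl
      | tail _ hbc ih =>
        rcases ih with rfl | rfl
        · exact Or.inr (hnbrP _ hbc)
        · exact Or.inl (hnbrQ _ hbc)
    rcases hclosed R (W.conn k hk1 (by omega) P hP R hR) with h | h
    · exact hRP h
    · exact hRQ h
  obtain ⟨C, hC⟩ := hex
  exact ⟨C, hC, fun y hy => hun y C hy hC⟩

lemma unique_all (W : VineAux N V) (h2 : 2 ≤ V.card) {v : Fin N}
    (htop : ∃! C, C ∈ W.clusters (V.card - 1) ∧ v ∈ C) :
    ∀ k, 1 ≤ k → k ≤ V.card - 1 → ∃! C, C ∈ W.clusters k ∧ v ∈ C := by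
  have main : ∀ d k, 1 ≤ k → k + d = V.card - 1 → ∃! C, C ∈ W.clusters k ∧ v ∈ C := by
    intro d
    induction d with
    | zero =>
      intro k hk1 hk
      have : k = V.card - 1 := by omega
      rw [this]; exact htop
    | succ d ih =>
      intro k hk1 hk
      exact W.step k hk1 (by omega) (ih (k + 1) (by omega) (by omega))
  intro k hk1 hk2
  exact main (V.card - 1 - k) k hk1 (by omega)

lemma leaf (W : VineAux N V) {v : Fin N}
    (huniq : ∀ k, 1 ≤ k → k ≤ V.card - 1 → ∃! C, C ∈ W.clusters k ∧ v ∈ C)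
    (k : ℕ) (hk1 : 1 ≤ k) (hk2 : k ≤ V.card - 2) {P : Finset (Fin N)}
    (hP : P ∈ W.clusters k) (hvP : v ∈ P) :
    ∃ Nk, W.adj k P Nk ∧ Nk ∈ W.clusters k ∧ v ∉ Nk ∧ (∀ x ∈ P, x ≠ v → x ∈ Nk) ∧
      (∀ X, W.adj k P X → X = Nk) := by
  have hm3 : 3 ≤ V.card := by omega
  obtain ⟨D, ⟨hD, hvD⟩, hDu⟩ := huniq (k + 1) (by omega) (by omega)
  have hsucc := W.clusters_succ (k + 1) (by omega) (by omega)
  simp only [Nat.add_sub_cancel] at hsucc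
  have key : ∀ X, W.adj k P X → P ∪ X = D := by
    intro X hadjRX
    have hmem : P ∪ X ∈ W.clusters (k + 1) := by
      rw [hsucc]; exact ⟨P, X, hadjRX, rfl⟩
    exact hDu _ ⟨hmem, Finset.mem_union_left _ hvP⟩
  obtain ⟨Q, hQ, hQP⟩ : ∃ Q ∈ W.clusters k, Q ≠ P := by
    by_contra hcon
    push_neg at hcon
    have hsub : W.clusters k ⊆ {P} := fun R hR => hcon R hR
    have h1 : (W.clusters k).ncard ≤ 1 := by
      have := Set.ncard_le_ncard hsub (Set.toFinite _)
      simpa using this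
    rw [W.ncard_clusters k hk1 (by omega)] at h1
    omega
  obtain ⟨Nk, hNk⟩ : ∃ X, W.adj k P X := by
    rcases (W.conn k hk1 (by omega) P hP Q hQ).cases_head with h | ⟨c, hc, _⟩
    · exact absurd h.symm hQP
    · exact ⟨c, hc⟩
  have huniqN : ∀ X, W.adj k P X → X = Nk := by
    intro X hX
    rcases W.inj k hk1 hk2 P X P Nk hX hNk ((key X hX).trans (key Nk hNk).symm) with
      ⟨_, h⟩ | ⟨h1, h2⟩
    · exact h
    · exact absurd h2.symm (W.adj_ne _ _ _ hX)
  have hNmem : Nk ∈ W.clusters k := (W.adj_mem _ _ _ hNk).2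
  have hvN : v ∉ Nk := by
    intro hvN
    have := (huniq k hk1 (by omega)).unique ⟨hNmem, hvN⟩ ⟨hP, hvP⟩
    exact (W.adj_ne _ _ _ hNk) this.symm
  have hPcard : P.card = k := W.card_of_mem k hk1 (by omega) P hP
  have hint : (P ∩ Nk).card = k - 1 := W.card_inter k hk1 (by omega) P Nk hNk
  have hsd : (P \ Nk).card = 1 := by
    have := Finset.card_inter_add_card_sdiff P Nk
    omega
  obtain ⟨a, ha⟩ := Finset.card_eq_one.mp hsd
  have hva : a = v := by
    have : v ∈ P \ Nk := Finset.mem_sdiff.mpr ⟨hvP, hvN⟩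
    rw [ha] at this
    exact (Finset.mem_singleton.mp this).symm
  refine ⟨Nk, hNk, hNmem, hvN, ?_, huniqN⟩
  intro x hxP hxv
  by_contra hxN
  have : x ∈ P \ Nk := Finset.mem_sdiff.mpr ⟨hxP, hxN⟩
  rw [ha, hva] at this
  exact hxv (Finset.mem_singleton.mp this)


def sub (W : VineAux N V) (v : Fin N) (hv : v ∈ V) (h2 : 2 ≤ V.card)
    (huniq : ∀ k, 1 ≤ k → k ≤ V.card - 1 → ∃! C, C ∈ W.clusters k ∧ v ∈ C) :
    VineAux N (V.erase v) where
  clusters k := {C ∈ W.clusters k | v ∉ C}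
  adj k A B := W.adj k A B ∧ v ∉ A ∧ v ∉ B
  adj_symm k A B h := ⟨W.adj_symm k A B h.1, h.2.2, h.2.1⟩
  adj_ne k A B h := W.adj_ne k A B h.1
  adj_mem k A B h := ⟨⟨(W.adj_mem k A B h.1).1, h.2.1⟩, ⟨(W.adj_mem k A B h.1).2, h.2.2⟩⟩
  subset_of_mem := by
    have hE : (V.erase v).card = V.card - 1 := Finset.card_erase_of_mem hv
    rintro k hk1 hk2 A ⟨hA, hvA⟩
    exact Finset.subset_erase.mpr ⟨W.subset_of_mem k hk1 (by omega) A hA, hvA⟩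
  card_of_mem := by
    have hE : (V.erase v).card = V.card - 1 := Finset.card_erase_of_mem hv
    rintro k hk1 hk2 A ⟨hA, _⟩
    exact W.card_of_mem k hk1 (by omega) A hA
  ncard_clusters := by
    have hE : (V.erase v).card = V.card - 1 := Finset.card_erase_of_mem hv
    intro k hk1 hk2
    obtain ⟨P, ⟨hPmem, hPv⟩, hPu⟩ := huniq k hk1 (by omega)
    have hseteq : {C ∈ W.clusters k | v ∉ C} = W.clusters k \ {P} := by
      ext C
      simp only [Set.mem_sep_iff, Set.mem_diff, Set.mem_singleton_iff]
      constructor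
      · rintro ⟨hC, hvC⟩
        refine ⟨hC, fun h => hvC (h ▸ hPv)⟩
      · rintro ⟨hC, hCP⟩
        exact ⟨hC, fun hvC => hCP (hPu C ⟨hC, hvC⟩)⟩
    beta_reduce
    rw [hseteq, Set.ncard_diff_singleton_of_mem hPmem,
      W.ncard_clusters k hk1 (by omega)]
    omega
  clusters_one := by
    beta_reduce
    rw [W.clusters_one]
    ext C
    simp only [Set.mem_sep_iff, Set.mem_setOf_eq, Finset.mem_erase]
    constructor
    · rintro ⟨⟨i, hi, rfl⟩, hvC⟩
      exact ⟨i, ⟨fun h => hvC (h ▸ Finset.mem_singleton_self i), hi⟩, rfl⟩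
    · rintro ⟨i, ⟨hiv, hi⟩, rfl⟩
      exact ⟨⟨i, hi, rfl⟩, fun h => hiv (Finset.mem_singleton.mp h).symm⟩
  clusters_succ := by
    have hE : (V.erase v).card = V.card - 1 := Finset.card_erase_of_mem hv
    intro k hk2 hk2'
    have hs := W.clusters_succ k hk2 (by omega)
    beta_reduce
    ext C
    simp only [Set.mem_sep_iff, Set.mem_setOf_eq]
    constructor
    · rintro ⟨hC, hvC⟩
      rw [hs] at hC
      obtain ⟨A, B, hadj, rfl⟩ := hC
      exact ⟨A, B, ⟨hadj, fun h => hvC (Finset.mem_union_left _ h),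
        fun h => hvC (Finset.mem_union_right _ h)⟩, rfl⟩
    · rintro ⟨A, B, ⟨hadj, hvA, hvB⟩, rfl⟩
      refine ⟨by rw [hs]; exact ⟨A, B, hadj, rfl⟩, ?_⟩
      intro h
      rcases Finset.mem_union.mp h with h | h
      · exact hvA h
      · exact hvB h
  card_inter := by
    have hE : (V.erase v).card = V.card - 1 := Finset.card_erase_of_mem hv
    intro k hk1 hk2 A B h
    exact W.card_inter k hk1 (by omega) A B h.1
  conn := by
    have hE : (V.erase v).card = V.card - 1 := Finset.card_erase_of_mem hv
    rintro k hk1 hk2 A ⟨hA, hvA⟩ B ⟨hB, hvB⟩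
    obtain ⟨P, ⟨hP, hvP⟩, hPu⟩ := huniq k hk1 (by omega)
    obtain ⟨Nk, hadjN, hNmem, hvN, _, hNuniq⟩ := W.leaf huniq k hk1 (by omega) hP hvP
    have hNP : Nk ≠ P := fun h => (W.adj_ne _ _ _ hadjN) h.symm
    set g : Finset (Fin N) → Finset (Fin N) := fun X => if X = P then Nk else X with hg
    have main : ∀ X Y, Relation.ReflTransGen (W.adj k) X Y →
        Relation.ReflTransGen (fun A B => W.adj k A B ∧ v ∉ A ∧ v ∉ B) (g X) (g Y) := by
      intro X Y h
      induction h using Relation.ReflTransGen.head_induction_on with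
      | refl => exact Relation.ReflTransGen.refl
      | head hac hcb ih =>
        rename_i a c
        by_cases haP : a = P
        · have hc : c = Nk := hNuniq c (haP ▸ hac)
          have h1 : g a = Nk := by simp [hg, haP]
          have h2 : g c = Nk := by subst hc; simp [hg, hNP]
          rw [h1, ← h2]; exact ih
        · by_cases hcP : c = P
          · have ha' : a = Nk := hNuniq a (W.adj_symm _ _ _ (hcP ▸ hac))
            have h1 : g a = Nk := by subst ha'; simp [hg, hNP]
            have h2 : g c = Nk := by simp [hg, hcP]
            rw [h1, ← h2]; exact ih
          · have hva : v ∉ a := fun hva => haP (hPu a ⟨(W.adj_mem _ _ _ hac).1, hva⟩)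
            have hvc : v ∉ c := fun hvc => hcP (hPu c ⟨(W.adj_mem _ _ _ hac).2, hvc⟩)
            have h1 : g a = a := by simp [hg, haP]
            have h2 : g c = c := by simp [hg, hcP]
            rw [h1]
            exact Relation.ReflTransGen.head ⟨hac, hva, hvc⟩ (h2 ▸ ih)
    have hAP : A ≠ P := fun h => hvA (h ▸ hvP)
    have hBP : B ≠ P := fun h => hvB (h ▸ hvP)
    have := main A B (W.conn k hk1 (by omega) A hA B hB)
    simpa [hg, hAP, hBP] using this
  inj := by
    have hE : (V.erase v).card = V.card - 1 := Finset.card_erase_of_mem hv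
    intro k hk1 hk2 A B A' B' h1 h2 h3
    exact W.inj k hk1 (by omega) A B A' B' h1.1 h2.1 h3

lemma rel_iff (W : VineAux N V) {v : Fin N} (hv : v ∈ V) (h2 : 2 ≤ V.card)
    (huniq : ∀ k, 1 ≤ k → k ≤ V.card - 1 → ∃! C, C ∈ W.clusters k ∧ v ∈ C)
    (k : ℕ) (hk1 : 1 ≤ k) (hk2 : k ≤ V.card - 2) {x y : Fin N} (hx : x ≠ v) (hy : y ≠ v) :
    W.Rel k x y ↔ (W.sub v hv h2 huniq).Rel k x y := by
  constructor
  · rintro ⟨hne, A, hA, hxA, hyA⟩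
    by_cases hvA : v ∈ A
    · obtain ⟨P, ⟨hP, hvP⟩, hPu⟩ := huniq k hk1 (by omega)
      have hAP : A = P := hPu A ⟨hA, hvA⟩
      obtain ⟨Nk, hadjN, hNmem, hvN, hsubN, _⟩ := W.leaf huniq k hk1 hk2 hP hvP
      exact ⟨hne, Nk, ⟨hNmem, hvN⟩, hsubN x (hAP ▸ hxA) hx, hsubN y (hAP ▸ hyA) hy⟩
    · exact ⟨hne, A, ⟨hA, hvA⟩, hxA, hyA⟩
  · rintro ⟨hne, A, ⟨hA, _⟩, hxA, hyA⟩
    exact ⟨hne, A, hA, hxA, hyA⟩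

end VineAux

theorem VineAux.good {N : ℕ} : ∀ (m : ℕ) (V : Finset (Fin N)) (W : VineAux N V), V.card ≤ m →
    ∃ l : List (Fin N), l.Nodup ∧ (∀ x, x ∈ l ↔ x ∈ V) ∧
      ∀ k, 1 ≤ k → k ≤ V.card - 1 → ∀ (i j1 j2 : ℕ) (hi : i < l.length)
        (hj1 : j1 < l.length) (hj2 : j2 < l.length), i < j1 → i < j2 →
        W.Rel k (l.get ⟨i, hi⟩) (l.get ⟨j1, hj1⟩) →
        W.Rel k (l.get ⟨i, hi⟩) (l.get ⟨j2, hj2⟩) →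
        l.get ⟨j1, hj1⟩ = l.get ⟨j2, hj2⟩ ∨
          W.Rel k (l.get ⟨j1, hj1⟩) (l.get ⟨j2, hj2⟩) := by
  intro m
  induction m with
  | zero =>
    intro V W hVm
    refine ⟨V.toList, Finset.nodup_toList V, fun x => by simp [Finset.mem_toList], ?_⟩
    intro k hk1 hk2 i j1 j2 hi hj1 hj2 hij1 hij2 hr1 hr2
    omega
  | succ m ih =>
    intro V W hVm
    by_cases hc : V.card ≤ 1
    · refine ⟨V.toList, Finset.nodup_toList V, fun x => by simp [Finset.mem_toList], ?_⟩
      intro k hk1 hk2 i j1 j2 hi hj1 hj2 hij1 hij2 hr1 hr2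
      omega
    · have h2 : 2 ≤ V.card := by omega
      obtain ⟨v, hvV, htop, B, hBmem, hBall⟩ := W.exists_leaf h2
      have huniq := W.unique_all h2 htop
      have hE : (V.erase v).card = V.card - 1 := Finset.card_erase_of_mem hvV
      obtain ⟨l', hnd', hmem', hprop'⟩ := ih (V.erase v) (W.sub v hvV h2 huniq) (by omega)
      have hvl' : v ∉ l' := fun h => by
        have := (hmem' v).mp h
        simp at this
      refine ⟨v :: l', List.nodup_cons.mpr ⟨hvl', hnd'⟩, ?_, ?_⟩
      · intro x
        simp only [List.mem_cons, hmem' x, Finset.mem_erase]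
        constructor
        · rintro (rfl | ⟨_, h⟩)
          · exact hvV
          · exact h
        · intro hxV
          by_cases hxv : x = v
          · exact Or.inl hxv
          · exact Or.inr ⟨hxv, hxV⟩
      · intro k hk1 hk2 i j1 j2 hi hj1 hj2 hij1 hij2 hr1 hr2
        cases j1 with
        | zero => omega
        | succ j1' =>
        cases j2 with
        | zero => omega
        | succ j2' =>
        have h1' : j1' < l'.length := by simpa using hj1
        have h2' : j2' < l'.length := by simpa using hj2
        have e1 : (v :: l').get ⟨j1' + 1, hj1⟩ = l'.get ⟨j1', h1'⟩ := rfl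
        have e2 : (v :: l').get ⟨j2' + 1, hj2⟩ = l'.get ⟨j2', h2'⟩ := rfl
        have hxl : l'.get ⟨j1', h1'⟩ ∈ l' := l'.get_mem _
        have hyl : l'.get ⟨j2', h2'⟩ ∈ l' := l'.get_mem _
        have hxE := Finset.mem_erase.mp ((hmem' _).mp hxl)
        have hyE := Finset.mem_erase.mp ((hmem' _).mp hyl)
        rw [e1] at hr1 ⊢
        rw [e2] at hr2 ⊢
        cases i with
        | zero =>
          have e0 : (v :: l').get ⟨0, hi⟩ = v := rfl
          rw [e0] at hr1 hr2
          obtain ⟨P, ⟨hP, hvP⟩, hPu⟩ := huniq k hk1 hk2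
          obtain ⟨hne1, A1, hA1, hvA1, hx1⟩ := hr1
          obtain ⟨hne2, A2, hA2, hvA2, hx2⟩ := hr2
          have hA1P : A1 = P := hPu A1 ⟨hA1, hvA1⟩
          have hA2P : A2 = P := hPu A2 ⟨hA2, hvA2⟩
          by_cases hxy : l'.get ⟨j1', h1'⟩ = l'.get ⟨j2', h2'⟩
          · exact Or.inl hxy
          · exact Or.inr ⟨hxy, P, hP, hA1P ▸ hx1, hA2P ▸ hx2⟩
        | succ i' =>
          have hi' : i' < l'.length := by simpa using hi
          have e0 : (v :: l').get ⟨i' + 1, hi⟩ = l'.get ⟨i', hi'⟩ := rfl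
          rw [e0] at hr1 hr2
          by_cases hk' : k ≤ V.card - 2
          · have hrel1 := (W.rel_iff hvV h2 huniq k hk1 hk' hxE.1 hyE.1)
            have hrel0x := (W.rel_iff hvV h2 huniq k hk1 hk'
              (Finset.mem_erase.mp ((hmem' _).mp (l'.get_mem ⟨i', hi'⟩))).1 hxE.1)
            have hrel0y := (W.rel_iff hvV h2 huniq k hk1 hk'
              (Finset.mem_erase.mp ((hmem' _).mp (l'.get_mem ⟨i', hi'⟩))).1 hyE.1)
            rcases hprop' k hk1 (by omega) i' j1' j2' hi' h1' h2' (by omega) (by omega)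
              (hrel0x.mp hr1) (hrel0y.mp hr2) with h | h
            · exact Or.inl h
            · exact Or.inr (hrel1.mpr h)
          · have hk : k = V.card - 1 := by omega
            subst hk
            by_cases hxy : l'.get ⟨j1', h1'⟩ = l'.get ⟨j2', h2'⟩
            · exact Or.inl hxy
            · exact Or.inr ⟨hxy, B, hBmem, hBall _ hxE.2 hxE.1, hBall _ hyE.2 hyE.1⟩

def Vine.toAux {n : ℕ} (W : Vine n) : VineAux n Finset.univ where
  clusters := W.clusters
  adj := W.adj
  adj_symm := W.adj_symm
  adj_ne := W.adj_ne
  adj_mem := W.adj_mem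
  subset_of_mem := fun _ _ _ A _ => A.subset_univ
  card_of_mem := by
    have hu : (Finset.univ : Finset (Fin n)).card = n := Finset.card_fin n
    intro k hk1 hk2
    exact W.card_of_mem_clusters k hk1 (by omega)
  ncard_clusters := by
    have hu : (Finset.univ : Finset (Fin n)).card = n := Finset.card_fin n
    intro k hk1 hk2
    rw [W.ncard_clusters k hk1 (by omega)]
    omega
  clusters_one := by
    rw [W.clusters_one]
    ext C
    simp [eq_comm]
  clusters_succ := by
    have hu : (Finset.univ : Finset (Fin n)).card = n := Finset.card_fin n
    intro k hk2 hk2'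
    exact W.clusters_succ k hk2 (by omega)
  card_inter := by
    have hu : (Finset.univ : Finset (Fin n)).card = n := Finset.card_fin n
    intro k hk1 hk2
    exact W.card_inter_of_adj k hk1 (by omega)
  conn := by
    have hu : (Finset.univ : Finset (Fin n)).card = n := Finset.card_fin n
    intro k hk1 hk2 A hA B hB
    have hT : (W.graph k).IsTree := W.isTree k hk1 (by omega)
    have hreach := hT.isConnected.preconnected ⟨A, hA⟩ ⟨B, hB⟩
    rw [SimpleGraph.reachable_iff_reflTransGen] at hreach
    have lift : ∀ (a b : {C // C ∈ W.clusters k}),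
        Relation.ReflTransGen (fun X Y : {C // C ∈ W.clusters k} => W.adj k X.1 Y.1) a b →
        Relation.ReflTransGen (W.adj k) a.1 b.1 := by
      intro a b h
      induction h with
      | refl => exact Relation.ReflTransGen.refl
      | tail _ hbc ih => exact Relation.ReflTransGen.tail ih hbc
    exact lift _ _ hreach
  inj := by
    classical
    have hu : (Finset.univ : Finset (Fin n)).card = n := Finset.card_fin n
    intro k hk1 hk2 A B A' B' hAB hA'B' huni
    have hkn : k + 1 ≤ n - 1 := by omega
    have hT : (W.graph k).IsTree := W.isTree k hk1 (by omega)
    letI : Fintype ↥(W.clusters k) := (Set.toFinite _).fintype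
    letI : Fintype ↥(W.graph k).edgeSet := (Set.toFinite _).fintype
    have hcardV : Fintype.card ↥(W.clusters k) = n - k + 1 := by
      rw [← Nat.card_eq_fintype_card, Nat.card_coe_set_eq,
        W.ncard_clusters k hk1 (by omega)]
    have hedge : (W.graph k).edgeFinset.card + 1 = n - k + 1 := by
      rw [hT.card_edgeFinset, hcardV]
    set f : Sym2 ↥(W.clusters k) → Finset (Fin n) :=
      Sym2.lift ⟨fun a b => (a : Finset (Fin n)) ∪ (b : Finset (Fin n)),
        fun a b => Finset.union_comm _ _⟩ with hf
    have hfin : (W.clusters (k + 1)).Finite := Set.toFinite _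
    have hsucc := W.clusters_succ (k + 1) (by omega) hkn
    simp only [Nat.add_sub_cancel] at hsucc
    have himg : (W.graph k).edgeFinset.image f = hfin.toFinset := by
      ext C
      simp only [Finset.mem_image, Set.Finite.mem_toFinset]
      constructor
      · rintro ⟨e, he, rfl⟩
        revert he
        induction e using Sym2.ind with
        | _ a b =>
          intro he
          rw [SimpleGraph.mem_edgeFinset, SimpleGraph.mem_edgeSet] at he
          rw [hsucc]
          exact ⟨a.1, b.1, he, by rw [hf, Sym2.lift_mk]⟩
      · intro hC
        rw [hsucc] at hC
        obtain ⟨X, Y, hadj, rfl⟩ := hC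
        refine ⟨s(⟨X, (W.adj_mem _ _ _ hadj).1⟩, ⟨Y, (W.adj_mem _ _ _ hadj).2⟩), ?_, ?_⟩
        · rw [SimpleGraph.mem_edgeFinset, SimpleGraph.mem_edgeSet]
          exact hadj
        · rw [hf, Sym2.lift_mk]
    have hcount : ((W.graph k).edgeFinset.image f).card = (W.graph k).edgeFinset.card := by
      rw [himg]
      have hnc := Set.ncard_eq_toFinset_card _ hfin
      rw [W.ncard_clusters (k + 1) (by omega) hkn] at hnc
      omega
    have hinj2 := Finset.card_image_iff.mp hcount
    have he1 : s((⟨A, (W.adj_mem _ _ _ hAB).1⟩ : ↥(W.clusters k)),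
        (⟨B, (W.adj_mem _ _ _ hAB).2⟩ : ↥(W.clusters k))) ∈ (W.graph k).edgeFinset := by
      rw [SimpleGraph.mem_edgeFinset, SimpleGraph.mem_edgeSet]
      exact hAB
    have he2 : s((⟨A', (W.adj_mem _ _ _ hA'B').1⟩ : ↥(W.clusters k)),
        (⟨B', (W.adj_mem _ _ _ hA'B').2⟩ : ↥(W.clusters k))) ∈ (W.graph k).edgeFinset := by
      rw [SimpleGraph.mem_edgeFinset, SimpleGraph.mem_edgeSet]
      exact hA'B'
    have heq := hinj2 (Finset.mem_coe.mpr he1) (Finset.mem_coe.mpr he2)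
      (by rw [hf, Sym2.lift_mk, Sym2.lift_mk]; exact huni)
    rw [Sym2.eq_iff] at heq
    rcases heq with ⟨h1, h2⟩ | ⟨h1, h2⟩
    · exact Or.inl ⟨Subtype.ext_iff.mp h1, Subtype.ext_iff.mp h2⟩
    · exact Or.inr ⟨Subtype.ext_iff.mp h1, Subtype.ext_iff.mp h2⟩


/-- For every vine on `n ≥ 2` variables there exists an ordering of its variables which
is simultaneously a perfect elimination ordering of the chordal graph representation of
every tree `T_1, …, T_(n-1)` of the vine. -/
theorem vine_exists_perfectEliminationOrdering {n : ℕ} (hn : 2 ≤ n) (W : Vine n) :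
    ∃ σ : Fin n ≃ Fin n, ∀ k, 1 ≤ k → k ≤ n - 1 →
      IsPerfectEliminationOrdering (W.repGraph k) σ := by
  obtain ⟨l, hnd, hmem, hprop⟩ := VineAux.good n Finset.univ W.toAux (by simp)
  have hlt : l.toFinset = Finset.univ := by
    ext x
    simp [hmem x]
  have hlen : l.length = n := by
    have h1 := congrArg Finset.card hlt
    rwa [List.toFinset_card_of_nodup hnd, Finset.card_univ, Fintype.card_fin] at h1
  have hinj : Function.Injective fun i : Fin n => l.get (Fin.cast hlen.symm i) := by
    intro i j h
    have h2 := List.nodup_iff_injective_get.mp hnd h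
    exact Fin.ext (by simpa using congrArg Fin.val h2)
  refine ⟨Equiv.ofBijective _ (Finite.injective_iff_bijective.mp hinj), ?_⟩
  intro k hk1 hk2 i
  rw [SimpleGraph.isClique_iff]
  intro x hx y hy hxy
  obtain ⟨hadjx, j1, hij1, hj1⟩ := hx
  obtain ⟨hadjy, j2, hij2, hj2⟩ := hy
  subst hj1
  subst hj2
  have hi : (i : ℕ) < l.length := by rw [hlen]; exact i.isLt
  have hb1 : (j1 : ℕ) < l.length := by rw [hlen]; exact j1.isLt
  have hb2 : (j2 : ℕ) < l.length := by rw [hlen]; exact j2.isLt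
  have hres := hprop k hk1 (by simpa using hk2) i.1 j1.1 j2.1 hi hb1 hb2 hij1 hij2
    hadjx hadjy
  rcases hres with h | h
  · exact absurd h hxy
  · exact h
end

section
/- Let (T_1,…,T_{n−1}) be a vine on n ≥ 3 variables, let A and B be the two clusters of T_{n−1}, and let s be either of the two elements of the symmetric difference (A ∪ B) ∖ (A ∩ B). Then for every k ∈ {1,…,n−2}: exactly one cluster of T_k contains s; this cluster is a leaf of T_k (adjacent to exactly one other cluster); and s does not belong to the separator (intersection with the neighboring cluster) of the unique edge incident to it. -/
namespace VineAux

variable {n : ℕ} (W : Vine n)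

lemma clusters_finite (k : ℕ) (h1 : 1 ≤ k) (h2 : k ≤ n - 1) : (W.clusters k).Finite := by
  by_contra h
  have h' : (W.clusters k).Infinite := h
  have := h'.ncard
  rw [W.ncard_clusters k h1 h2] at this
  omega

lemma graph_isTree (k : ℕ) (h1 : 1 ≤ k) (h2 : k ≤ n - 1) : (W.graph k).IsTree :=
  W.isTree k h1 h2

lemma card_clusters (k : ℕ) (h1 : 1 ≤ k) (h2 : k ≤ n - 1) :
    Nat.card (W.clusters k) = n - k + 1 := by
  rw [Nat.card_coe_set_eq]; exact W.ncard_clusters k h1 h2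

lemma clusters_succ' (k : ℕ) (hk1 : 1 ≤ k) (hk2 : k ≤ n - 2) (hn : 3 ≤ n) :
    W.clusters (k + 1) = {C | ∃ A B, W.adj k A B ∧ C = A ∪ B} := by
  have := W.clusters_succ (k + 1) (by omega) (by omega)
  simpa using this

/-- Edge uniqueness: distinct edges of `T_k` have distinct unions. -/
lemma edge_unique (k : ℕ) (hk1 : 1 ≤ k) (hk2 : k ≤ n - 2) (hn : 3 ≤ n)
    {C D C' D' : Finset (Fin n)} (h : W.adj k C D) (h' : W.adj k C' D')
    (heq : C ∪ D = C' ∪ D') : (C' = C ∧ D' = D) ∨ (C' = D ∧ D' = C) := by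
  classical
  have hk2' : k ≤ n - 1 := by omega
  have hfin : (W.clusters k).Finite := clusters_finite W k hk1 hk2'
  haveI : Fintype (W.clusters k) := hfin.fintype
  haveI : Fintype (W.graph k).edgeSet := Fintype.ofFinite _
  have htree := graph_isTree W k hk1 hk2'
  have hcardV : Fintype.card (W.clusters k) = n - k + 1 := by
    rw [← Nat.card_eq_fintype_card]; exact card_clusters W k hk1 hk2'
  have hedge : Nat.card (W.graph k).edgeSet = n - k := by
    have h1 := htree.card_edgeFinset
    rw [hcardV, SimpleGraph.edgeFinset_card] at h1
    rw [Nat.card_eq_fintype_card]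
    omega
  have hsucc := clusters_succ' W k hk1 hk2 hn
  -- the union map on edges
  let u : Sym2 (W.clusters k) → Finset (Fin n) :=
    Sym2.lift ⟨fun a b => a.1 ∪ b.1, fun a b => Finset.union_comm _ _⟩
  have hmem : ∀ e : Sym2 (W.clusters k), e ∈ (W.graph k).edgeSet → u e ∈ W.clusters (k + 1) := by
    intro e
    induction e using Sym2.ind with
    | _ a b =>
      intro he
      rw [hsucc]
      exact ⟨a.1, b.1, he, rfl⟩
  let f : (W.graph k).edgeSet → W.clusters (k + 1) := fun e => ⟨u e.1, hmem e.1 e.2⟩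
  have hsurj : Function.Surjective f := by
    rintro ⟨X, hX⟩
    rw [hsucc] at hX
    obtain ⟨P, Q, hPQ, rfl⟩ := hX
    have hP := (W.adj_mem k P Q hPQ).1
    have hQ := (W.adj_mem k P Q hPQ).2
    exact ⟨⟨s(⟨P, hP⟩, ⟨Q, hQ⟩), hPQ⟩, rfl⟩
  have hbij : Function.Bijective f := by
    rw [Nat.bijective_iff_surjective_and_card]
    refine ⟨hsurj, ?_⟩
    rw [hedge, card_clusters W (k + 1) (by omega) (by omega)]
    omega
  have hC := (W.adj_mem k C D h).1
  have hD := (W.adj_mem k C D h).2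
  have hC' := (W.adj_mem k C' D' h').1
  have hD' := (W.adj_mem k C' D' h').2
  have he : f ⟨s(⟨C, hC⟩, ⟨D, hD⟩), h⟩ = f ⟨s(⟨C', hC'⟩, ⟨D', hD'⟩), h'⟩ :=
    Subtype.ext heq
  have := hbij.1 he
  replace this := Subtype.mk.inj this
  rw [Sym2.eq_iff] at this
  rcases this with ⟨h1, h2⟩ | ⟨h1, h2⟩
  · exact Or.inl ⟨(congrArg Subtype.val h1).symm, (congrArg Subtype.val h2).symm⟩
  · exact Or.inr ⟨(congrArg Subtype.val h2).symm, (congrArg Subtype.val h1).symm⟩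

/-- every cluster has a neighbour -/
lemma exists_neighbor (k : ℕ) (hk1 : 1 ≤ k) (hk2 : k ≤ n - 2) (hn : 3 ≤ n)
    {C : Finset (Fin n)} (hC : C ∈ W.clusters k) : ∃ E, W.adj k C E := by
  have hk2' : k ≤ n - 1 := by omega
  have htree := graph_isTree W k hk1 hk2'
  haveI : Fintype (W.clusters k) := (clusters_finite W k hk1 hk2').fintype
  have hcard : 1 < Fintype.card (W.clusters k) := by
    have := card_clusters W k hk1 hk2'
    rw [Nat.card_eq_fintype_card] at this
    omega
  haveI : Nontrivial (W.clusters k) := Fintype.one_lt_card_iff_nontrivial.mp hcard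
  set v : W.clusters k := ⟨C, hC⟩
  obtain ⟨w, hw⟩ := exists_ne v
  obtain ⟨p⟩ := htree.isConnected.preconnected v w
  cases p with
  | nil => exact absurd rfl hw
  | cons hadj p' => exact ⟨_, hadj⟩

/-- Key induction step. -/
lemma step_s9 (k : ℕ) (hk1 : 1 ≤ k) (hk2 : k ≤ n - 2) (hn : 3 ≤ n) (s : Fin n)
    (U : Finset (Fin n)) (hU : U ∈ W.clusters (k + 1)) (hsU : s ∈ U)
    (huniq : ∀ V ∈ W.clusters (k + 1), s ∈ V → V = U) :
    ∃ C ∈ W.clusters k, s ∈ C ∧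
      (∀ C' ∈ W.clusters k, s ∈ C' → C' = C) ∧
      (∃! D, W.adj k C D) ∧
      (∀ D, W.adj k C D → s ∉ C ∩ D) := by
  have hk2' : k ≤ n - 1 := by omega
  have hsucc := clusters_succ' W k hk1 hk2 hn
  obtain ⟨C, D, hCD, hUeq⟩ : ∃ A B, W.adj k A B ∧ U = A ∪ B := by
    rw [hsucc] at hU; exact hU
  -- any edge at a cluster containing s is the edge {C, D}
  have key : ∀ C' E, W.adj k C' E → s ∈ C' → (C' = C ∧ E = D) ∨ (C' = D ∧ E = C) := by
    intro C' E hadj hs'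
    have hmem : C' ∪ E ∈ W.clusters (k + 1) := by
      rw [hsucc]; exact ⟨C', E, hadj, rfl⟩
    have hEq : C' ∪ E = U := huniq _ hmem (Finset.mem_union_left _ hs')
    exact edge_unique W k hk1 hk2 hn hCD hadj (hUeq ▸ hEq.symm)
  -- s is not in both C and D
  have not_both : ¬(s ∈ C ∧ s ∈ D) := by
    rintro ⟨h1, h2⟩
    have nbrC : ∀ E, W.adj k C E → E = D := by
      intro E hE
      rcases key C E hE h1 with ⟨_, hED⟩ | ⟨hCDeq, _⟩
      · exact hED
      · exact absurd hCDeq (W.adj_ne k C D hCD)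
    have nbrD : ∀ E, W.adj k D E → E = C := by
      intro E hE
      rcases key D E hE h2 with ⟨hDCeq, _⟩ | ⟨_, hEC⟩
      · exact absurd hDCeq.symm (W.adj_ne k C D hCD)
      · exact hEC
    have hC' := (W.adj_mem k C D hCD).1
    have hD' := (W.adj_mem k C D hCD).2
    set c : W.clusters k := ⟨C, hC'⟩
    set d : W.clusters k := ⟨D, hD'⟩
    have htree := graph_isTree W k hk1 hk2'
    have closed : ∀ (x y : W.clusters k) (_ : (W.graph k).Walk x y),
        (x = c ∨ x = d) → (y = c ∨ y = d) := by
      intro x y p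
      induction p with
      | nil => exact id
      | cons hadj p ih =>
        rename_i a b _
        intro ha
        apply ih
        rcases ha with rfl | rfl
        · exact Or.inr (Subtype.ext (nbrC b.1 hadj))
        · exact Or.inl (Subtype.ext (nbrD b.1 hadj))
    have hall : ∀ y : W.clusters k, y = c ∨ y = d := by
      intro y
      obtain ⟨p⟩ := htree.isConnected.preconnected c y
      exact closed c y p (Or.inl rfl)
    have hsurj : Function.Surjective (fun i : Fin 2 => if i = 0 then c else d) := by
      intro y
      rcases hall y with rfl | rfl
      · exact ⟨0, rfl⟩
      · exact ⟨1, rfl⟩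
    have := Nat.card_le_card_of_surjective _ hsurj
    rw [card_clusters W k hk1 hk2', Nat.card_eq_fintype_card] at this
    simp [Fintype.card_fin] at this
    omega
  -- the generic conclusion
  have aux : ∀ C₀ D₀, W.adj k C₀ D₀ → s ∈ C₀ → s ∉ D₀ →
      ∃ C ∈ W.clusters k, s ∈ C ∧
        (∀ C' ∈ W.clusters k, s ∈ C' → C' = C) ∧
        (∃! D, W.adj k C D) ∧
        (∀ D, W.adj k C D → s ∉ C ∩ D) := by
    intro C₀ D₀ hadj hs₀ hns₀
    have nbr : ∀ E, W.adj k C₀ E → E = D₀ := by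
      intro E hE
      have hmem : C₀ ∪ E ∈ W.clusters (k + 1) := by
        rw [hsucc]; exact ⟨C₀, E, hE, rfl⟩
      have hEq : C₀ ∪ E = C₀ ∪ D₀ := by
        rw [huniq _ hmem (Finset.mem_union_left _ hs₀)]
        have hmem' : C₀ ∪ D₀ ∈ W.clusters (k + 1) := by
          rw [hsucc]; exact ⟨C₀, D₀, hadj, rfl⟩
        rw [huniq _ hmem' (Finset.mem_union_left _ hs₀)]
      rcases edge_unique W k hk1 hk2 hn hadj hE hEq.symm with ⟨_, h2⟩ | ⟨h1, _⟩
      · exact h2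
      · exact absurd h1 (W.adj_ne k C₀ D₀ hadj)
    refine ⟨C₀, (W.adj_mem k C₀ D₀ hadj).1, hs₀, ?_, ⟨D₀, hadj, fun E hE => nbr E hE⟩, ?_⟩
    · intro C' hC' hsC'
      obtain ⟨E, hE⟩ := exists_neighbor W k hk1 hk2 hn hC'
      rcases key C' E hE hsC' with ⟨h1, _⟩ | ⟨h1, _⟩
      · -- C' = C : then s ∈ C, so C is the s-cluster; need C' = C₀
        subst h1
        -- both C' (= C) and C₀ contain s; C₀ ∈ {C, D} as well
        obtain ⟨E', hE'⟩ := exists_neighbor W k hk1 hk2 hn ((W.adj_mem k C₀ D₀ hadj).1)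
        rcases key C₀ E' hE' hs₀ with ⟨h2, _⟩ | ⟨h2, _⟩
        · exact h2.symm
        · exact absurd ⟨hsC', h2 ▸ hs₀⟩ not_both
      · subst h1
        obtain ⟨E', hE'⟩ := exists_neighbor W k hk1 hk2 hn ((W.adj_mem k C₀ D₀ hadj).1)
        rcases key C₀ E' hE' hs₀ with ⟨h2, _⟩ | ⟨h2, _⟩
        · exact absurd ⟨h2 ▸ hs₀, hsC'⟩ not_both
        · exact h2.symm
    · intro E hE hmem
      rw [nbr E hE] at hmem
      exact hns₀ (Finset.mem_inter.mp hmem).2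
  rw [hUeq] at hsU
  rcases Finset.mem_union.mp hsU with hsC | hsD
  · have hnsD : s ∉ D := fun h => not_both ⟨hsC, h⟩
    exact aux C D hCD hsC hnsD
  · have hnsC : s ∉ C := fun h => not_both ⟨h, hsD⟩
    exact aux D C (W.adj_symm k C D hCD) hsD hnsC

end VineAux

/-- Let `A` and `B` be the two clusters of the last tree `T_(n-1)` of a vine on `n ≥ 3`
variables and let `s` be either of the two elements of `(A ∪ B) \ (A ∩ B)`. Then for
every `k ∈ {1, …, n-2}`: exactly one cluster `C` of `T_k` contains `s`; this cluster is
a leaf of `T_k` (adjacent to exactly one other cluster); and `s` does not belong to the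
separator `C ∩ D` of the unique edge `{C, D}` incident to it. -/
theorem vine_symmDiff_element_is_leaf {n : ℕ} (hn : 3 ≤ n) (W : Vine n)
    (A B : Finset (Fin n))
    (hA : A ∈ W.clusters (n - 1)) (hB : B ∈ W.clusters (n - 1)) (hAB : A ≠ B)
    (s : Fin n) (hs : s ∈ (A ∪ B) \ (A ∩ B)) :
    ∀ k, 1 ≤ k → k ≤ n - 2 →
      ∃ C ∈ W.clusters k, s ∈ C ∧
        (∀ C' ∈ W.clusters k, s ∈ C' → C' = C) ∧
        (∃! D, W.adj k C D) ∧
        (∀ D, W.adj k C D → s ∉ C ∩ D) := by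
  -- `P j` : there is exactly one cluster of `T_(n-1-j)` containing `s`
  have hsU : s ∈ A ∪ B := (Finset.mem_sdiff.mp hs).1
  have hsI : s ∉ A ∩ B := (Finset.mem_sdiff.mp hs).2
  have hclusters : W.clusters (n - 1) = {A, B} := by
    have h2 : (W.clusters (n - 1)).ncard = 2 := by
      rw [W.ncard_clusters (n - 1) (by omega) le_rfl]; omega
    obtain ⟨a, b, hab, hset⟩ := Set.ncard_eq_two.mp h2
    rw [hset]
    rw [hset] at hA hB
    rcases hA with rfl | rfl <;> rcases hB with rfl | rfl
    · exact absurd rfl hAB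
    · rfl
    · simp [Set.pair_comm]
    · exact absurd rfl hAB
  have base : ∃ U ∈ W.clusters (n - 1), s ∈ U ∧
      ∀ V ∈ W.clusters (n - 1), s ∈ V → V = U := by
    rcases Finset.mem_union.mp hsU with hsA | hsB
    · have hnsB : s ∉ B := fun h => hsI (Finset.mem_inter.mpr ⟨hsA, h⟩)
      refine ⟨A, hA, hsA, ?_⟩
      intro V hV hsV
      rw [hclusters] at hV
      rcases hV with rfl | rfl
      · rfl
      · exact absurd hsV hnsB
    · have hnsA : s ∉ A := fun h => hsI (Finset.mem_inter.mpr ⟨h, hsB⟩)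
      refine ⟨B, hB, hsB, ?_⟩
      intro V hV hsV
      rw [hclusters] at hV
      rcases hV with rfl | rfl
      · exact absurd hsV hnsA
      · rfl
  have P : ∀ j, j ≤ n - 2 → ∃ U ∈ W.clusters (n - 1 - j), s ∈ U ∧
      ∀ V ∈ W.clusters (n - 1 - j), s ∈ V → V = U := by
    intro j
    induction j with
    | zero => intro _; simpa using base
    | succ j ih =>
      intro hj
      obtain ⟨U, hU, hsU', huniq⟩ := ih (by omega)
      have hm : n - 1 - j = (n - 1 - (j + 1)) + 1 := by omega
      rw [hm] at hU huniq
      obtain ⟨C, hC, hsC, hCuniq, _, _⟩ :=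
        VineAux.step_s9 W (n - 1 - (j + 1)) (by omega) (by omega) hn s U hU hsU' huniq
      exact ⟨C, hC, hsC, hCuniq⟩
  intro k hk1 hk2
  obtain ⟨U, hU, hsU', huniq⟩ := P (n - 2 - k) (by omega)
  have hm : n - 1 - (n - 2 - k) = k + 1 := by omega
  rw [hm] at hU huniq
  exact VineAux.step_s9 W k hk1 hk2 hn s U hU hsU' huniq
end

section
/- Let (T_1,…,T_{n−1}) be a vine on n ≥ 2 variables. Then there exist at least 2^{n−1} distinct orderings of {1,…,n}, each of which is a perfect elimination ordering of the chordal graph representation of every tree T_1,…,T_{n−1}. -/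
open Relation

section RelLemmas

variable {α : Type*} {r : α → α → Prop}

lemma rel_escape (hsymm : ∀ x y, r x y → r y x) {E F : α}
    (hE : ∀ Z, r E Z → Z = F) (hF : ∀ Z, r F Z → Z = E) {X : α}
    (h : Relation.ReflTransGen r X E) : X = E ∨ X = F := by
  induction h using Relation.ReflTransGen.head_induction_on with
  | refl => exact Or.inl rfl
  | head hrel hrtg ih =>
    rcases ih with rfl | rfl
    · exact Or.inr (hE _ (hsymm _ _ hrel))
    · exact Or.inl (hF _ (hsymm _ _ hrel))

lemma rtg_avoid (hsymm : ∀ x y, r x y → r y x) {C D : α}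
    (hC : ∀ Z, r C Z → Z = D) (hne : C ≠ D) {X Y : α}
    (h : Relation.ReflTransGen r X Y) (hX : X ≠ C) (hY : Y ≠ C) :
    Relation.ReflTransGen (fun A B => r A B ∧ A ≠ C ∧ B ≠ C) X Y := by
  have main : (Y ≠ C → Relation.ReflTransGen (fun A B => r A B ∧ A ≠ C ∧ B ≠ C) X Y) ∧
      (Y = C → Relation.ReflTransGen (fun A B => r A B ∧ A ≠ C ∧ B ≠ C) X D) := by
    clear hY
    induction h with
    | refl => exact ⟨fun _ => Relation.ReflTransGen.refl, fun h => absurd h hX⟩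
    | tail h1 step ih =>
      rename_i b Y'
      by_cases hb : b = C
      · have hYD : Y' = D := hC _ (hb ▸ step)
        refine ⟨fun _ => ?_, fun hYC => absurd (hYD ▸ hYC ▸ rfl) hne.symm⟩
        exact hYD ▸ ih.2 hb
      · refine ⟨fun hY' => (ih.1 hb).tail ⟨step, hb, hY'⟩, fun hYC => ?_⟩
        have : b = D := hC _ (hsymm _ _ (hYC ▸ step))
        exact this ▸ ih.1 hb
  exact main.1 hY

lemma walk_to_rtg {V : Type*} {G : SimpleGraph V} {r : V → V → Prop}
    (hr : ∀ x y, G.Adj x y → r x y) : ∀ {u v : V}, G.Walk u v → Relation.ReflTransGen r u v := by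
  intro u v w
  induction w with
  | nil => exact Relation.ReflTransGen.refl
  | cons h p ih => exact Relation.ReflTransGen.head (hr _ _ h) ih

end RelLemmas

/-- list version of a perfect elimination ordering -/
def peoList {n : ℕ} (G : SimpleGraph (Fin n)) (L : List (Fin n)) : Prop :=
  ∀ (i : ℕ) (h : i < L.length),
    G.IsClique {v | G.Adj (L.get ⟨i, h⟩) v ∧ v ∈ L.drop (i + 1)}

/-- generalized vine on a ground set `S` -/
structure GVine (n : ℕ) (S : Finset (Fin n)) where
  clusters : ℕ → Set (Finset (Fin n))
  adj : ℕ → Finset (Fin n) → Finset (Fin n) → Prop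
  adj_symm : ∀ k A B, adj k A B → adj k B A
  adj_ne : ∀ k A B, adj k A B → A ≠ B
  adj_mem : ∀ k A B, adj k A B → A ∈ clusters k ∧ B ∈ clusters k
  subset_of_mem : ∀ k, 1 ≤ k → k ≤ S.card - 1 → ∀ A ∈ clusters k, A ⊆ S
  card_of_mem : ∀ k, 1 ≤ k → k ≤ S.card - 1 → ∀ A ∈ clusters k, A.card = k
  ncard_clusters : ∀ k, 1 ≤ k → k ≤ S.card - 1 → (clusters k).ncard = S.card - k + 1
  clusters_succ : ∀ k, 2 ≤ k → k ≤ S.card - 1 →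
    clusters k = {C | ∃ A B, adj (k - 1) A B ∧ C = A ∪ B}
  card_inter : ∀ k, 1 ≤ k → k ≤ S.card - 1 → ∀ A B, adj k A B → (A ∩ B).card = k - 1
  conn : ∀ k, 1 ≤ k → k ≤ S.card - 1 → ∀ A ∈ clusters k, ∀ B ∈ clusters k,
    Relation.ReflTransGen (adj k) A B
  ncard_edges : ∀ k, 1 ≤ k → k ≤ S.card - 1 →
    {e : Sym2 (Finset (Fin n)) | ∃ A B, adj k A B ∧ e = s(A, B)}.ncard = S.card - k

/-- chordal graph representation -/
def GVine.grep {n : ℕ} {S : Finset (Fin n)} (W : GVine n S) (k : ℕ) : SimpleGraph (Fin n) where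
  Adj x y := x ≠ y ∧ ∃ A ∈ W.clusters k, x ∈ A ∧ y ∈ A
  symm := by constructor; rintro x y ⟨hne, A, hA, hx, hy⟩; exact ⟨hne.symm, A, hA, hy, hx⟩
  loopless := ⟨fun x h => h.1 rfl⟩

namespace GVine

variable {n : ℕ} {S : Finset (Fin n)} (W : GVine n S)

lemma union_inj {k : ℕ} (h1 : 1 ≤ k) (h2 : k + 1 ≤ S.card - 1)
    {A B A' B' : Finset (Fin n)} (hAB : W.adj k A B) (hA'B' : W.adj k A' B')
    (h : A ∪ B = A' ∪ B') : s(A, B) = s(A', B') := by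
  set E : Set (Sym2 (Finset (Fin n))) := {e | ∃ X Y, W.adj k X Y ∧ e = s(X, Y)} with hE
  set f : Sym2 (Finset (Fin n)) → Finset (Fin n) :=
    Sym2.lift ⟨fun X Y => X ∪ Y, fun X Y => Finset.union_comm X Y⟩ with hf
  have himg : f '' E = W.clusters (k + 1) := by
    rw [W.clusters_succ (k + 1) (by omega) (by omega)]
    ext C
    constructor
    · rintro ⟨e, ⟨X, Y, hXY, rfl⟩, rfl⟩
      exact ⟨X, Y, by simpa using hXY, by simp [hf]⟩
    · rintro ⟨X, Y, hXY, rfl⟩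
      exact ⟨s(X, Y), ⟨X, Y, by simpa using hXY, rfl⟩, by simp [hf]⟩
  have hcard : (f '' E).ncard = E.ncard := by
    rw [himg, W.ncard_clusters (k + 1) (by omega) h2, W.ncard_edges k h1 (by omega)]
    omega
  have hinj : Set.InjOn f E := Set.injOn_of_ncard_image_eq hcard (Set.toFinite E)
  have h1' : s(A, B) ∈ E := ⟨A, B, hAB, rfl⟩
  have h2' : s(A', B') ∈ E := ⟨A', B', hA'B', rfl⟩
  exact hinj h1' h2' (by simpa [hf] using h)

end GVine
namespace GVine

variable {n : ℕ} {S : Finset (Fin n)} (W : GVine n S)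

lemma top (h2 : 2 ≤ S.card) :
    ∃ A B, W.adj (S.card - 1) A B ∧ A ∪ B = S ∧ W.clusters (S.card - 1) = {A, B} := by
  have h1 : (1 : ℕ) ≤ S.card - 1 := by omega
  have hn : (W.clusters (S.card - 1)).ncard = 2 := by
    rw [W.ncard_clusters _ h1 le_rfl]; omega
  obtain ⟨A, B, hne, hset⟩ := Set.ncard_eq_two.1 hn
  have hA : A ∈ W.clusters (S.card - 1) := by rw [hset]; simp
  have hB : B ∈ W.clusters (S.card - 1) := by rw [hset]; simp
  have hadj : W.adj (S.card - 1) A B := by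
    have := W.conn _ h1 le_rfl A hA B hB
    rcases (Relation.ReflTransGen.cases_head this) with rfl | ⟨c, hc, _⟩
    · exact absurd rfl hne
    · have hcmem : c ∈ W.clusters (S.card - 1) := (W.adj_mem _ _ _ hc).2
      rw [hset] at hcmem
      rcases hcmem with rfl | rfl
      · exact absurd rfl (W.adj_ne _ _ _ hc)
      · exact hc
  refine ⟨A, B, hadj, ?_, hset⟩
  have hcA : A.card = S.card - 1 := W.card_of_mem _ h1 le_rfl A hA
  have hcB : B.card = S.card - 1 := W.card_of_mem _ h1 le_rfl B hB
  have hcAB : (A ∩ B).card = S.card - 2 := by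
    have := W.card_inter _ h1 le_rfl A B hadj; omega
  have hcU : (A ∪ B).card = S.card := by
    have := Finset.card_union_add_card_inter A B
    omega
  have hsub : A ∪ B ⊆ S := by
    apply Finset.union_subset <;> exact W.subset_of_mem _ h1 le_rfl _ ‹_›
  exact Finset.eq_of_subset_of_card_le hsub (le_of_eq hcU.symm)

/-- the key downward step: unique cluster at level k+1 yields a unique leaf
cluster at level k -/
lemma step {k : ℕ} (h1 : 1 ≤ k) (h2 : k + 1 ≤ S.card - 1)
    {a : Fin n} {C' : Finset (Fin n)} (hC' : C' ∈ W.clusters (k + 1)) (haC' : a ∈ C')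
    (hUniq : ∀ X ∈ W.clusters (k + 1), a ∈ X → X = C') :
    ∃ C D, C ∈ W.clusters k ∧ D ∈ W.clusters k ∧ a ∈ C ∧ a ∉ D ∧ W.adj k C D ∧
      (∀ X ∈ W.clusters k, a ∈ X → X = C) ∧ (∀ Z, W.adj k C Z → Z = D) ∧ C ∪ D = C' := by
  -- decompose C' as a union of an edge
  have hsucc := W.clusters_succ (k + 1) (by omega) h2
  rw [hsucc] at hC'
  obtain ⟨E₀, F₀, hEF₀, hCu₀⟩ := hC'
  simp only [Nat.add_sub_cancel] at hEF₀
  -- wlog a ∈ E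
  have main : ∀ E F : Finset (Fin n), W.adj k E F → C' = E ∪ F → a ∈ E →
      ∃ C D, C ∈ W.clusters k ∧ D ∈ W.clusters k ∧ a ∈ C ∧ a ∉ D ∧ W.adj k C D ∧
        (∀ X ∈ W.clusters k, a ∈ X → X = C) ∧ (∀ Z, W.adj k C Z → Z = D) ∧ C ∪ D = C' := by
    intro E F hEF hCu haE
    have hkrange : k ≤ S.card - 1 := by omega
    have key1 : ∀ X Z, W.adj k X Z → a ∈ X → X ∪ Z = C' := by
      intro X Z hXZ haX
      have : X ∪ Z ∈ W.clusters (k + 1) := by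
        rw [hsucc]; exact ⟨X, Z, by simpa using hXZ, rfl⟩
      exact hUniq _ this (Finset.mem_union_left _ haX)
    have key2 : ∀ X Z, W.adj k X Z → a ∈ X → s(X, Z) = s(E, F) := by
      intro X Z hXZ haX
      exact W.union_inj h1 h2 hXZ hEF ((key1 X Z hXZ haX).trans hCu)
    have hEonly : ∀ Z, W.adj k E Z → Z = F := by
      intro Z hZ
      rcases Sym2.eq_iff.1 (key2 E Z hZ haE) with ⟨_, h⟩ | ⟨h, _⟩
      · exact h
      · exact absurd h (W.adj_ne _ _ _ hEF)
    have hEmem : E ∈ W.clusters k := (W.adj_mem _ _ _ hEF).1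
    have hFmem : F ∈ W.clusters k := (W.adj_mem _ _ _ hEF).2
    by_cases haF : a ∈ F
    · -- impossible: both E and F contain a
      exfalso
      have hFonly : ∀ Z, W.adj k F Z → Z = E := by
        intro Z hZ
        rcases Sym2.eq_iff.1 (key2 F Z hZ haF) with ⟨h, _⟩ | ⟨_, h⟩
        · exact absurd h.symm (W.adj_ne _ _ _ hEF)
        · exact h
      -- there is a third cluster
      have h3 : 3 ≤ (W.clusters k).ncard := by
        rw [W.ncard_clusters k h1 hkrange]; omega
      have : ∃ X ∈ W.clusters k, X ≠ E ∧ X ≠ F := by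
        by_contra hcon
        push_neg at hcon
        have hsub : W.clusters k ⊆ {E, F} := by
          intro X hX
          by_cases hXE : X = E
          · exact Or.inl hXE
          · exact Or.inr (hcon X hX hXE)
        have := Set.ncard_le_ncard hsub (Set.toFinite _)
        have hpair : ({E, F} : Set (Finset (Fin n))).ncard ≤ 2 :=
          (Set.ncard_insert_le _ _).trans (by simp)
        omega
      obtain ⟨X, hXmem, hXE, hXF⟩ := this
      rcases rel_escape (W.adj_symm k) hEonly hFonly
        (W.conn k h1 hkrange X hXmem E hEmem) with h | h
      · exact hXE h
      · exact hXF h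
    · -- a ∉ F : E is the unique cluster containing a, with unique neighbour F
      refine ⟨E, F, hEmem, hFmem, haE, haF, hEF, ?_, hEonly, hCu.symm⟩
      intro X hXmem haX
      by_contra hXE
      obtain ⟨c, hc, _⟩ := (Relation.ReflTransGen.cases_head
        (W.conn k h1 hkrange X hXmem E hEmem)).resolve_left hXE
      rcases Sym2.eq_iff.1 (key2 X c hc haX) with ⟨h, _⟩ | ⟨h, _⟩
      · exact hXE h
      · exact haF (h ▸ haX)
  rcases Finset.mem_union.1 (hCu₀ ▸ haC') with haE | haF
  · exact main E₀ F₀ hEF₀ hCu₀ haE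
  · exact main F₀ E₀ (W.adj_symm _ _ _ hEF₀) (hCu₀.trans (Finset.union_comm _ _)) haF

end GVine
namespace GVine

variable {n : ℕ} {S : Finset (Fin n)} (W : GVine n S)

lemma uniqAll (h2 : 2 ≤ S.card) {a : Fin n} {A₀ B₀ : Finset (Fin n)}
    (hadj : W.adj (S.card - 1) A₀ B₀) (haA : a ∈ A₀) (haB : a ∉ B₀)
    (hset : W.clusters (S.card - 1) = {A₀, B₀}) :
    ∀ k, 1 ≤ k → k ≤ S.card - 1 →
      ∃ C ∈ W.clusters k, a ∈ C ∧ ∀ X ∈ W.clusters k, a ∈ X → X = C := by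
  have aux : ∀ d k, 1 ≤ k → k + d = S.card - 1 →
      ∃ C ∈ W.clusters k, a ∈ C ∧ ∀ X ∈ W.clusters k, a ∈ X → X = C := by
    intro d
    induction d with
    | zero =>
      intro k hk1 hkd
      simp only [Nat.add_zero] at hkd
      subst hkd
      refine ⟨A₀, by rw [hset]; simp, haA, ?_⟩
      intro X hX haX
      rw [hset] at hX
      rcases hX with rfl | rfl
      · rfl
      · exact absurd haX haB
    | succ d ih =>
      intro k hk1 hkd
      obtain ⟨C', hC'mem, haC', hU⟩ := ih (k + 1) (by omega) (by omega)
      obtain ⟨C, D, hCmem, _, haC, _, _, hUk, _, _⟩ :=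
        W.step hk1 (by omega) hC'mem haC' hU
      exact ⟨C, hCmem, haC, hUk⟩
  intro k hk1 hk2
  exact aux (S.card - 1 - k) k hk1 (by omega)

lemma leafData (h2 : 2 ≤ S.card) {a : Fin n} {A₀ B₀ : Finset (Fin n)}
    (hadj : W.adj (S.card - 1) A₀ B₀) (haA : a ∈ A₀) (haB : a ∉ B₀)
    (hset : W.clusters (S.card - 1) = {A₀, B₀}) {k : ℕ} (h1 : 1 ≤ k)
    (hk : k + 1 ≤ S.card - 1) :
    ∃ C D, C ∈ W.clusters k ∧ D ∈ W.clusters k ∧ a ∈ C ∧ a ∉ D ∧ W.adj k C D ∧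
      (∀ X ∈ W.clusters k, a ∈ X → X = C) ∧ (∀ Z, W.adj k C Z → Z = D) ∧
      (∀ x ∈ C, x ≠ a → x ∈ D) := by
  obtain ⟨C', hC'mem, haC', hU⟩ := W.uniqAll h2 hadj haA haB hset (k + 1) (by omega) hk
  obtain ⟨C, D, hCmem, hDmem, haC, haD, hCD, hUk, hNbr, _⟩ :=
    W.step h1 hk hC'mem haC' hU
  refine ⟨C, D, hCmem, hDmem, haC, haD, hCD, hUk, hNbr, ?_⟩
  have hint : (C ∩ D).card = k - 1 := W.card_inter k h1 (by omega) C D hCD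
  have hCcard : C.card = k := W.card_of_mem k h1 (by omega) C hCmem
  have hsub : C ∩ D ⊆ C.erase a := by
    intro x hx
    rw [Finset.mem_erase]
    have hxD : x ∈ D := Finset.mem_of_mem_inter_right hx
    exact ⟨fun h => haD (h ▸ hxD), Finset.mem_of_mem_inter_left hx⟩
  have hce : (C.erase a).card = k - 1 := by
    rw [Finset.card_erase_of_mem haC, hCcard]
  have heq : C ∩ D = C.erase a :=
    Finset.eq_of_subset_of_card_le hsub (by omega)
  intro x hxC hxa
  have : x ∈ C.erase a := Finset.mem_erase.2 ⟨hxa, hxC⟩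
  rw [← heq] at this
  exact Finset.mem_of_mem_inter_right this

end GVine
namespace GVine

variable {n : ℕ} {S : Finset (Fin n)} (W : GVine n S)

/-- remove the variable `a` (a "top leaf" variable) from a vine -/
def restrict (h2 : 2 ≤ S.card) {a : Fin n} {A₀ B₀ : Finset (Fin n)}
    (hadj : W.adj (S.card - 1) A₀ B₀) (haA : a ∈ A₀) (haB : a ∉ B₀)
    (hset : W.clusters (S.card - 1) = {A₀, B₀}) : GVine n (S.erase a) := by
  have haS : a ∈ S := W.subset_of_mem (S.card - 1) (by omega) le_rfl A₀
    ((W.adj_mem _ _ _ hadj).1) haA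
  have hm : (S.erase a).card = S.card - 1 := Finset.card_erase_of_mem haS
  refine
  { clusters := fun k => {X | X ∈ W.clusters k ∧ a ∉ X}
    adj := fun k X Y => W.adj k X Y ∧ a ∉ X ∧ a ∉ Y
    adj_symm := fun k X Y h => ⟨W.adj_symm k X Y h.1, h.2.2, h.2.1⟩
    adj_ne := fun k X Y h => W.adj_ne k X Y h.1
    adj_mem := fun k X Y h => ⟨⟨(W.adj_mem k X Y h.1).1, h.2.1⟩, (W.adj_mem k X Y h.1).2, h.2.2⟩
    subset_of_mem := ?_
    card_of_mem := ?_
    ncard_clusters := ?_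
    clusters_succ := ?_
    card_inter := ?_
    conn := ?_
    ncard_edges := ?_ }
  · -- subset_of_mem
    rintro k hk1 hk2 A ⟨hA, haA'⟩ x hx
    rw [hm] at hk2
    exact Finset.mem_erase.2 ⟨fun h => haA' (h ▸ hx),
      W.subset_of_mem k hk1 (by omega) A hA hx⟩
  · -- card_of_mem
    rintro k hk1 hk2 A ⟨hA, _⟩
    rw [hm] at hk2
    exact W.card_of_mem k hk1 (by omega) A hA
  · -- ncard_clusters
    intro k hk1 hk2
    rw [hm] at hk2 ⊢
    obtain ⟨C, D, hCmem, hDmem, haC, haD, hCD, hUk, hNbr, hsub⟩ :=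
      W.leafData h2 hadj haA haB hset hk1 (by omega)
    have hEq : {X | X ∈ W.clusters k ∧ a ∉ X} = W.clusters k \ {C} := by
      ext X
      simp only [Set.mem_setOf_eq, Set.mem_diff, Set.mem_singleton_iff]
      constructor
      · rintro ⟨hX, haX⟩
        exact ⟨hX, fun h => haX (h ▸ haC)⟩
      · rintro ⟨hX, hne⟩
        exact ⟨hX, fun haX => hne (hUk X hX haX)⟩
    show {X | X ∈ W.clusters k ∧ a ∉ X}.ncard = S.card - 1 - k + 1
    rw [hEq, Set.ncard_diff_singleton_of_mem hCmem,
      W.ncard_clusters k hk1 (by omega)]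
    omega
  · -- clusters_succ
    intro k hk2 hk3
    rw [hm] at hk3
    ext C
    simp only [Set.mem_setOf_eq]
    constructor
    · rintro ⟨hC, haC⟩
      rw [W.clusters_succ k hk2 (by omega)] at hC
      obtain ⟨X, Y, hXY, rfl⟩ := hC
      exact ⟨X, Y, ⟨hXY, fun h => haC (Finset.mem_union_left _ h),
        fun h => haC (Finset.mem_union_right _ h)⟩, rfl⟩
    · rintro ⟨X, Y, ⟨hXY, haX, haY⟩, rfl⟩
      refine ⟨?_, ?_⟩
      · rw [W.clusters_succ k hk2 (by omega)]
        exact ⟨X, Y, hXY, rfl⟩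
      · simp only [Finset.mem_union]
        rintro (h | h)
        · exact haX h
        · exact haY h
  · -- card_inter
    rintro k hk1 hk2 A B ⟨hAB, _, _⟩
    rw [hm] at hk2
    exact W.card_inter k hk1 (by omega) A B hAB
  · -- conn
    rintro k hk1 hk2 A ⟨hA, haA'⟩ B ⟨hB, haB'⟩
    rw [hm] at hk2
    obtain ⟨C, D, hCmem, hDmem, haC, haD, hCD, hUk, hNbr, _⟩ :=
      W.leafData h2 hadj haA haB hset hk1 (by omega)
    have hrtg := W.conn k hk1 (by omega) A hA B hB
    have hAC : A ≠ C := fun h => haA' (h ▸ haC)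
    have hBC : B ≠ C := fun h => haB' (h ▸ haC)
    have := rtg_avoid (W.adj_symm k) hNbr (W.adj_ne k C D hCD) hrtg hAC hBC
    refine Relation.ReflTransGen.mono ?_ _ _ this
    rintro X Y ⟨hXY, hXC, hYC⟩
    refine ⟨hXY, ?_, ?_⟩
    · exact fun haX => hXC (hUk X (W.adj_mem k X Y hXY).1 haX)
    · exact fun haY => hYC (hUk Y (W.adj_mem k X Y hXY).2 haY)
  · -- ncard_edges
    intro k hk1 hk2
    rw [hm] at hk2 ⊢
    obtain ⟨C, D, hCmem, hDmem, haC, haD, hCD, hUk, hNbr, _⟩ :=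
      W.leafData h2 hadj haA haB hset hk1 (by omega)
    have hEq : {e : Sym2 (Finset (Fin n)) |
        ∃ A B, (W.adj k A B ∧ a ∉ A ∧ a ∉ B) ∧ e = s(A, B)} =
        {e : Sym2 (Finset (Fin n)) | ∃ A B, W.adj k A B ∧ e = s(A, B)} \ {s(C, D)} := by
      ext e
      simp only [Set.mem_setOf_eq, Set.mem_diff, Set.mem_singleton_iff]
      constructor
      · rintro ⟨A, B, ⟨hAB, haA', haB'⟩, rfl⟩
        refine ⟨⟨A, B, hAB, rfl⟩, fun h => ?_⟩
        rcases Sym2.eq_iff.1 h with ⟨rfl, rfl⟩ | ⟨rfl, rfl⟩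
        · exact haA' haC
        · exact haB' haC
      · rintro ⟨⟨A, B, hAB, rfl⟩, hne⟩
        have haA' : a ∉ A := by
          intro haA''
          have hAC : A = C := hUk A (W.adj_mem k A B hAB).1 haA''
          have hBD : B = D := hNbr B (hAC ▸ hAB)
          exact hne (by rw [hAC, hBD])
        have haB' : a ∉ B := by
          intro haB''
          have hBC : B = C := hUk B (W.adj_mem k A B hAB).2 haB''
          have hAD : A = D := hNbr A (W.adj_symm k A C (hBC ▸ hAB))
          exact hne (by rw [hAD, hBC]; exact Sym2.eq_swap)
        exact ⟨A, B, ⟨hAB, haA', haB'⟩, rfl⟩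
    show {e : Sym2 (Finset (Fin n)) |
        ∃ A B, (W.adj k A B ∧ a ∉ A ∧ a ∉ B) ∧ e = s(A, B)}.ncard = S.card - 1 - k
    have hmemCD : s(C, D) ∈ {e : Sym2 (Finset (Fin n)) | ∃ A B, W.adj k A B ∧ e = s(A, B)} :=
      ⟨C, D, hCD, rfl⟩
    rw [hEq, Set.ncard_diff_singleton_of_mem hmemCD,
      W.ncard_edges k hk1 (by omega)]
    omega

end GVine
namespace GVine

variable {n : ℕ} {S : Finset (Fin n)} (W : GVine n S)

lemma clique_cluster {k : ℕ} {X : Finset (Fin n)} (hX : X ∈ W.clusters k) :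
    (W.grep k).IsClique ↑X := fun x hx y hy hne => ⟨hne, X, hX, hx, hy⟩

lemma grep_mono_restrict (h2 : 2 ≤ S.card) {a : Fin n} {A₀ B₀ : Finset (Fin n)}
    (hadj : W.adj (S.card - 1) A₀ B₀) (haA : a ∈ A₀) (haB : a ∉ B₀)
    (hset : W.clusters (S.card - 1) = {A₀, B₀}) {k : ℕ} {x y : Fin n}
    (h : ((W.restrict h2 hadj haA haB hset).grep k).Adj x y) : (W.grep k).Adj x y := by
  obtain ⟨hne, X, hX, hx, hy⟩ := h
  exact ⟨hne, X, hX.1, hx, hy⟩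

lemma restrict_adj_iff (h2 : 2 ≤ S.card) {a : Fin n} {A₀ B₀ : Finset (Fin n)}
    (hadj : W.adj (S.card - 1) A₀ B₀) (haA : a ∈ A₀) (haB : a ∉ B₀)
    (hset : W.clusters (S.card - 1) = {A₀, B₀}) {k : ℕ} (hk1 : 1 ≤ k)
    (hk : k + 1 ≤ S.card - 1) {x y : Fin n} (hx : x ≠ a) (hy : y ≠ a) :
    ((W.restrict h2 hadj haA haB hset).grep k).Adj x y ↔ (W.grep k).Adj x y := by
  constructor
  · exact W.grep_mono_restrict h2 hadj haA haB hset
  · rintro ⟨hne, X, hX, hxX, hyX⟩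
    obtain ⟨C, D, hCmem, hDmem, haC, haD, hCD, hUk, hNbr, hsub⟩ :=
      W.leafData h2 hadj haA haB hset hk1 hk
    by_cases haX : a ∈ X
    · have hXC : X = C := hUk X hX haX
      subst hXC
      exact ⟨hne, D, ⟨hDmem, haD⟩, hsub x hxX hx, hsub y hyX hy⟩
    · exact ⟨hne, X, ⟨hX, haX⟩, hxX, hyX⟩

lemma erase_eq (h2 : 2 ≤ S.card) {a : Fin n} {A₀ B₀ : Finset (Fin n)}
    (hadjm : W.adj (S.card - 1) A₀ B₀) (haA : a ∈ A₀) (haB : a ∉ B₀)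
    (hunion : A₀ ∪ B₀ = S) : S.erase a = B₀ := by
  have h1 : (1 : ℕ) ≤ S.card - 1 := by omega
  have hA₀ : A₀ ∈ W.clusters (S.card - 1) := (W.adj_mem _ _ _ hadjm).1
  have hcA : A₀.card = S.card - 1 := W.card_of_mem _ h1 le_rfl A₀ hA₀
  have hcAB : (A₀ ∩ B₀).card = S.card - 2 := by
    have := W.card_inter _ h1 le_rfl A₀ B₀ hadjm; omega
  have hsd : (A₀ \ B₀).card = 1 := by
    have := Finset.card_sdiff_add_card_inter A₀ B₀; omega
  obtain ⟨c, hc⟩ := Finset.card_eq_one.1 hsd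
  have hac : a = c := by
    have : a ∈ A₀ \ B₀ := Finset.mem_sdiff.2 ⟨haA, haB⟩
    rw [hc] at this; exact Finset.mem_singleton.1 this
  subst hac
  ext x
  rw [Finset.mem_erase, ← hunion]
  constructor
  · rintro ⟨hxa, hx⟩
    rcases Finset.mem_union.1 hx with hxA | hxB
    · by_cases hxB : x ∈ B₀
      · exact hxB
      · exact absurd (Finset.mem_singleton.1 (hc ▸ Finset.mem_sdiff.2 ⟨hxA, hxB⟩)) hxa
    · exact hxB
  · intro hxB
    refine ⟨fun h => haB (h ▸ hxB), Finset.mem_union_right _ hxB⟩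

lemma cons_good (h2 : 2 ≤ S.card) {a : Fin n} {A₀ B₀ : Finset (Fin n)}
    (hadjm : W.adj (S.card - 1) A₀ B₀) (haA : a ∈ A₀) (haB : a ∉ B₀)
    (hset : W.clusters (S.card - 1) = {A₀, B₀}) (hunion : A₀ ∪ B₀ = S)
    {L : List (Fin n)} (hnd : L.Nodup) (htf : L.toFinset = S.erase a)
    (hpeo : ∀ k, 1 ≤ k → k ≤ (S.erase a).card - 1 →
      peoList ((W.restrict h2 hadjm haA haB hset).grep k) L) :
    (a :: L).Nodup ∧ (a :: L).toFinset = S ∧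
      ∀ k, 1 ≤ k → k ≤ S.card - 1 → peoList (W.grep k) (a :: L) := by
  have haS : a ∈ S := W.subset_of_mem (S.card - 1) (by omega) le_rfl A₀
    ((W.adj_mem _ _ _ hadjm).1) haA
  have hm : (S.erase a).card = S.card - 1 := Finset.card_erase_of_mem haS
  have haL : a ∉ L := by
    rw [← List.mem_toFinset, htf]; simp
  refine ⟨List.nodup_cons.2 ⟨haL, hnd⟩, ?_, ?_⟩
  · rw [List.toFinset_cons, htf, Finset.insert_erase haS]
  intro k hk1 hk2 i hi
  match i with
  | 0 =>
    obtain ⟨C, hC, haC, hU⟩ := W.uniqAll h2 hadjm haA haB hset k hk1 hk2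
    refine SimpleGraph.IsClique.subset ?_ (W.clique_cluster hC)
    rintro v ⟨⟨hne, X, hX, hax, hvx⟩, _⟩
    rw [hU X hX hax] at hvx
    exact hvx
  | i + 1 =>
    have hi' : i < L.length := by simpa using hi
    have hget : (a :: L).get ⟨i + 1, hi⟩ = L.get ⟨i, hi'⟩ := rfl
    have hdrop : (a :: L).drop (i + 1 + 1) = L.drop (i + 1) := rfl
    set x := L.get ⟨i, hi'⟩ with hx
    have hxL : x ∈ L := List.get_mem L ⟨i, hi'⟩
    have hxa : x ≠ a := fun h => haL (h ▸ hxL)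
    rw [hget, hdrop]
    by_cases hk : k + 1 ≤ S.card - 1
    · -- use the restricted vine
      have hpeo' := hpeo k hk1 (by omega) i hi'
      have hSetEq : {v | (W.grep k).Adj x v ∧ v ∈ L.drop (i + 1)} =
          {v | ((W.restrict h2 hadjm haA haB hset).grep k).Adj (L.get ⟨i, hi'⟩) v ∧
            v ∈ L.drop (i + 1)} := by
        ext v
        simp only [Set.mem_setOf_eq]
        constructor
        · rintro ⟨hadj', hv⟩
          have hvL : v ∈ L := List.mem_of_mem_drop hv
          have hva : v ≠ a := fun h => haL (h ▸ hvL)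
          exact ⟨(W.restrict_adj_iff h2 hadjm haA haB hset hk1 hk hxa hva).2 hadj', hv⟩
        · rintro ⟨hadj', hv⟩
          exact ⟨W.grep_mono_restrict h2 hadjm haA haB hset hadj', hv⟩
      rw [hSetEq]
      intro u hu v hv hne
      exact W.grep_mono_restrict h2 hadjm haA haB hset (hpeo' hu hv hne)
    · -- top level: everything in sight lies in B₀
      have hBmem : B₀ ∈ W.clusters (S.card - 1) := (W.adj_mem _ _ _ hadjm).2
      have hkeq : k = S.card - 1 := by omega
      subst hkeq
      refine SimpleGraph.IsClique.subset ?_ (W.clique_cluster hBmem)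
      rintro v ⟨_, hv⟩
      have hvL : v ∈ L := List.mem_of_mem_drop hv
      rw [← List.mem_toFinset, htf, W.erase_eq h2 hadjm haA haB hunion] at hvL
      exact hvL

end GVine
lemma peoList_of_short {n : ℕ} {G : SimpleGraph (Fin n)} {L : List (Fin n)}
    (h : L.length ≤ 2) : peoList G L := by
  intro i hi
  have hlen : (L.drop (i + 1)).length ≤ 1 := by
    rw [List.length_drop]; omega
  have hss : ∀ (l : List (Fin n)), l.length ≤ 1 → ∀ u ∈ l, ∀ v ∈ l, u = v := by
    intro l hl u hu v hv
    match l, hl with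
    | [], _ => simp at hu
    | [w], _ =>
      simp only [List.mem_singleton] at hu hv
      rw [hu, hv]
  apply Set.Subsingleton.pairwise
  rintro u ⟨_, hu⟩ v ⟨_, hv⟩
  exact hss _ hlen u hu v hv

theorem gvine_main (m : ℕ) : 2 ≤ m → ∀ {n : ℕ} (S : Finset (Fin n)), S.card = m →
    ∀ W : GVine n S,
    2 ^ (m - 1) ≤ Set.ncard {L : List (Fin n) | L.Nodup ∧ L.toFinset = S ∧
      ∀ k, 1 ≤ k → k ≤ S.card - 1 → peoList (W.grep k) L} := by
  induction m using Nat.strong_induction_on with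
  | _ m ih =>
  intro hm n S hS W
  set Good := {L : List (Fin n) | L.Nodup ∧ L.toFinset = S ∧
      ∀ k, 1 ≤ k → k ≤ S.card - 1 → peoList (W.grep k) L} with hGood
  have hfin : Good.Finite := by
    apply Set.Finite.subset (List.finite_length_eq (Fin n) m)
    rintro L ⟨hnd, htf, _⟩
    have := List.toFinset_card_of_nodup hnd
    simp only [Set.mem_setOf_eq]
    rw [← this, htf, hS]
  by_cases hm2 : m = 2
  · -- base case
    subst hm2
    obtain ⟨x, y, hxy, rfl⟩ := Finset.card_eq_two.1 hS
    have hmem : ∀ u v : Fin n, u ≠ v → ({u, v} : Finset (Fin n)) = {x, y} →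
        [u, v] ∈ Good := by
      intro u v huv htf
      refine ⟨by simp [huv], by simp [htf], fun k _ _ => peoList_of_short (by simp)⟩
    have h1 : [x, y] ∈ Good := hmem x y hxy rfl
    have h2 : [y, x] ∈ Good := hmem y x hxy.symm (by rw [Finset.pair_comm])
    have hsub : {[x, y], [y, x]} ⊆ Good := by
      rintro L (rfl | rfl)
      · exact h1
      · simpa using h2
    have hne : [x, y] ≠ [y, x] := fun h => hxy (List.cons_eq_cons.mp h).1
    calc 2 ^ (2 - 1) = ({[x, y], [y, x]} : Set (List (Fin n))).ncard := by
          rw [Set.ncard_pair hne]; norm_num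
      _ ≤ Good.ncard := Set.ncard_le_ncard hsub hfin
  · -- inductive step
    have hm3 : 3 ≤ m := by omega
    obtain ⟨A, B, hadj, hunion, hset⟩ := W.top (by omega)
    have hAmem : A ∈ W.clusters (S.card - 1) := (W.adj_mem _ _ _ hadj).1
    have hBmem : B ∈ W.clusters (S.card - 1) := (W.adj_mem _ _ _ hadj).2
    have h1 : (1 : ℕ) ≤ S.card - 1 := by omega
    have hcA : A.card = S.card - 1 := W.card_of_mem _ h1 le_rfl A hAmem
    have hcB : B.card = S.card - 1 := W.card_of_mem _ h1 le_rfl B hBmem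
    have hcAB : (A ∩ B).card = S.card - 2 := by
      have := W.card_inter _ h1 le_rfl A B hadj; omega
    have hsdA : (A \ B).card = 1 := by
      have := Finset.card_sdiff_add_card_inter A B; omega
    have hsdB : (B \ A).card = 1 := by
      have := Finset.card_sdiff_add_card_inter B A
      rw [Finset.inter_comm] at this; omega
    obtain ⟨a, ha⟩ := Finset.card_eq_one.1 hsdA
    obtain ⟨b, hb⟩ := Finset.card_eq_one.1 hsdB
    have haA : a ∈ A := (Finset.mem_sdiff.1 (ha ▸ Finset.mem_singleton_self a)).1
    have haB : a ∉ B := (Finset.mem_sdiff.1 (ha ▸ Finset.mem_singleton_self a)).2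
    have hbB : b ∈ B := (Finset.mem_sdiff.1 (hb ▸ Finset.mem_singleton_self b)).1
    have hbA : b ∉ A := (Finset.mem_sdiff.1 (hb ▸ Finset.mem_singleton_self b)).2
    have hab : a ≠ b := fun h => haB (h ▸ hbB)
    have haS : a ∈ S := hunion ▸ Finset.mem_union_left _ haA
    have hbS : b ∈ S := hunion ▸ Finset.mem_union_right _ hbB
    have hma : (S.erase a).card = m - 1 := by
      rw [Finset.card_erase_of_mem haS, hS]
    have hmb : (S.erase b).card = m - 1 := by
      rw [Finset.card_erase_of_mem hbS, hS]
    -- the symmetric data for b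
    have hadj' : W.adj (S.card - 1) B A := W.adj_symm _ _ _ hadj
    have hset' : W.clusters (S.card - 1) = {B, A} := by rw [hset, Set.pair_comm]
    have hunion' : B ∪ A = S := by rw [Finset.union_comm]; exact hunion
    set Wa := W.restrict (by omega) hadj haA haB hset with hWa
    set Wb := W.restrict (by omega) hadj' hbB hbA hset' with hWb
    have IHa := ih (m - 1) (by omega) (by omega) (S.erase a) hma Wa
    have IHb := ih (m - 1) (by omega) (by omega) (S.erase b) hmb Wb
    set Ga := {L : List (Fin n) | L.Nodup ∧ L.toFinset = S.erase a ∧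
      ∀ k, 1 ≤ k → k ≤ (S.erase a).card - 1 → peoList (Wa.grep k) L} with hGa
    set Gb := {L : List (Fin n) | L.Nodup ∧ L.toFinset = S.erase b ∧
      ∀ k, 1 ≤ k → k ≤ (S.erase b).card - 1 → peoList (Wb.grep k) L} with hGb
    set Ia := (fun L => a :: L) '' Ga with hIa
    set Ib := (fun L => b :: L) '' Gb with hIb
    have hIaGood : Ia ⊆ Good := by
      rintro _ ⟨L, ⟨hnd, htf, hpeo⟩, rfl⟩
      exact W.cons_good (by omega) hadj haA haB hset hunion hnd htf hpeo
    have hIbGood : Ib ⊆ Good := by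
      rintro _ ⟨L, ⟨hnd, htf, hpeo⟩, rfl⟩
      exact W.cons_good (by omega) hadj' hbB hbA hset' hunion' hnd htf hpeo
    have hdisj : Disjoint Ia Ib := by
      rw [Set.disjoint_left]
      rintro _ ⟨La, _, rfl⟩ ⟨Lb, _, hEq⟩
      exact hab ((List.cons_eq_cons.mp hEq).1).symm
    have hcardIa : Ia.ncard = Ga.ncard :=
      Set.ncard_image_of_injective Ga (List.cons_injective)
    have hcardIb : Ib.ncard = Gb.ncard :=
      Set.ncard_image_of_injective Gb (List.cons_injective)
    have hfinIa : Ia.Finite := hfin.subset hIaGood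
    have hfinIb : Ib.Finite := hfin.subset hIbGood
    calc 2 ^ (m - 1) = 2 ^ (m - 2) + 2 ^ (m - 2) := by
          rw [show m - 1 = (m - 2) + 1 by omega, pow_succ]; omega
      _ ≤ Ga.ncard + Gb.ncard := by
          apply Nat.add_le_add
          · simpa [Nat.sub_sub] using IHa
          · simpa [Nat.sub_sub] using IHb
      _ = Ia.ncard + Ib.ncard := by rw [hcardIa, hcardIb]
      _ = (Ia ∪ Ib).ncard := (Set.ncard_union_eq hdisj hfinIa hfinIb).symm
      _ ≤ Good.ncard := Set.ncard_le_ncard (Set.union_subset hIaGood hIbGood) hfin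
section VineToGVine

variable {n : ℕ}

lemma walk_to_rtg' {V : Type*} {β : Type*} {G : SimpleGraph V} (f : V → β)
    {r : β → β → Prop} (hr : ∀ x y, G.Adj x y → r (f x) (f y)) :
    ∀ {u v : V}, G.Walk u v → Relation.ReflTransGen r (f u) (f v) := by
  intro u v w
  induction w with
  | nil => exact Relation.ReflTransGen.refl
  | cons h p ih => exact Relation.ReflTransGen.head (hr _ _ h) ih

lemma Vine.conn' (W : Vine n) (k : ℕ) (h1 : 1 ≤ k) (h2 : k ≤ n - 1) :
    ∀ A ∈ W.clusters k, ∀ B ∈ W.clusters k,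
      Relation.ReflTransGen (W.adj k) A B := by
  intro A hA B hB
  have htree : (W.graph k).IsTree := W.isTree k h1 h2
  obtain ⟨w⟩ := htree.isConnected.preconnected ⟨A, hA⟩ ⟨B, hB⟩
  exact walk_to_rtg' (Subtype.val) (fun x y h => h) w

lemma Vine.edges' (W : Vine n) (k : ℕ) (h1 : 1 ≤ k) (h2 : k ≤ n - 1) :
    {e : Sym2 (Finset (Fin n)) | ∃ A B, W.adj k A B ∧ e = s(A, B)}.ncard = n - k := by
  classical
  have htree : (W.graph k).IsTree := W.isTree k h1 h2
  haveI : Fintype ↥(W.clusters k) := (Set.toFinite _).fintype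
  haveI : Fintype (W.graph k).edgeSet := (Set.toFinite _).fintype
  have hcardV : Fintype.card ↥(W.clusters k) = n - k + 1 := by
    rw [← Set.toFinset_card, ← Set.ncard_eq_toFinset_card']
    exact W.ncard_clusters k h1 h2
  have hedge := htree.card_edgeFinset
  rw [hcardV] at hedge
  have himg : Sym2.map Subtype.val '' (W.graph k).edgeSet =
      {e : Sym2 (Finset (Fin n)) | ∃ A B, W.adj k A B ∧ e = s(A, B)} := by
    ext e
    constructor
    · rintro ⟨e', he', rfl⟩
      revert he'
      induction e' using Sym2.ind with
      | _ u v =>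
        intro he'
        exact ⟨u.1, v.1, (SimpleGraph.mem_edgeSet _).1 he', (Sym2.map_pair_eq _ _ _)⟩
    · rintro ⟨A, B, hAB, rfl⟩
      refine ⟨s(⟨A, (W.adj_mem k A B hAB).1⟩, ⟨B, (W.adj_mem k A B hAB).2⟩),
        (SimpleGraph.mem_edgeSet _).2 hAB, (Sym2.map_pair_eq _ _ _)⟩
  rw [← himg, Set.ncard_image_of_injective _ (Sym2.map.injective Subtype.val_injective)]
  have hns : (W.graph k).edgeSet.ncard = (W.graph k).edgeFinset.card := by
    rw [Set.ncard_eq_toFinset_card']; rfl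
  omega

/-- a vine is a generalized vine on the full ground set -/
def Vine.toGVine (W : Vine n) : GVine n Finset.univ where
  clusters := W.clusters
  adj := W.adj
  adj_symm := W.adj_symm
  adj_ne := W.adj_ne
  adj_mem := W.adj_mem
  subset_of_mem := fun _ _ _ A _ => A.subset_univ
  card_of_mem := fun k hk1 hk2 =>
    W.card_of_mem_clusters k hk1 (by rwa [Finset.card_fin] at hk2)
  ncard_clusters := fun k hk1 hk2 => by
    rw [Finset.card_fin] at hk2 ⊢
    exact W.ncard_clusters k hk1 hk2
  clusters_succ := fun k hk1 hk2 =>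
    W.clusters_succ k hk1 (by rwa [Finset.card_fin] at hk2)
  card_inter := fun k hk1 hk2 =>
    W.card_inter_of_adj k hk1 (by rwa [Finset.card_fin] at hk2)
  conn := fun k hk1 hk2 =>
    W.conn' k hk1 (by rwa [Finset.card_fin] at hk2)
  ncard_edges := fun k hk1 hk2 => by
    rw [Finset.card_fin] at hk2 ⊢
    exact W.edges' k hk1 hk2

lemma Vine.toGVine_grep (W : Vine n) (k : ℕ) : W.toGVine.grep k = W.repGraph k := rfl

end VineToGVine
section Final

variable {n : ℕ}

/-- the permutation determined by a list enumeration -/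
noncomputable def listToPerm (L : List (Fin n)) : Fin n ≃ Fin n :=
  if h : L.length = n ∧ L.Nodup then
    Equiv.ofBijective (fun i => L.get (Fin.cast h.1.symm i))
      (by
        have hinj : Function.Injective (fun i : Fin n => L.get (Fin.cast h.1.symm i)) := by
          intro i j hij
          have := List.nodup_iff_injective_get.1 h.2 hij
          have h2 := congrArg Fin.val this
          rw [Fin.coe_cast, Fin.coe_cast] at h2
          exact Fin.ext h2
        exact Finite.injective_iff_bijective.1 hinj)
  else Equiv.refl _

lemma listToPerm_apply {L : List (Fin n)} (h1 : L.length = n) (h2 : L.Nodup) (i : Fin n) :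
    listToPerm L i = L.get (Fin.cast h1.symm i) := by
  rw [listToPerm, dif_pos (⟨h1, h2⟩ : L.length = n ∧ L.Nodup)]
  rfl

lemma peo_of_peoList {G : SimpleGraph (Fin n)} {L : List (Fin n)} (hlen : L.length = n)
    (hnd : L.Nodup) (h : peoList G L) : IsPerfectEliminationOrdering G (listToPerm L) := by
  intro i
  have hi : (i : ℕ) < L.length := by rw [hlen]; exact i.2
  have happ : ∀ j : Fin n, listToPerm L j = L.get (Fin.cast hlen.symm j) :=
    listToPerm_apply hlen hnd
  have hgi : listToPerm L i = L.get ⟨i, hi⟩ := happ i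
  have hseteq : {v | G.Adj (listToPerm L i) v ∧ ∃ j : Fin n, i < j ∧ listToPerm L j = v} =
      {v | G.Adj (L.get ⟨(i : ℕ), hi⟩) v ∧ v ∈ L.drop ((i : ℕ) + 1)} := by
    ext v
    simp only [Set.mem_setOf_eq, hgi]
    constructor
    · rintro ⟨hadj, j, hij, rfl⟩
      refine ⟨hadj, ?_⟩
      rw [happ j]
      have hj : (j : ℕ) < L.length := by rw [hlen]; exact j.2
      have hij' : (i : ℕ) < (j : ℕ) := hij
      have ht : (j : ℕ) - ((i : ℕ) + 1) < (L.drop ((i : ℕ) + 1)).length := by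
        rw [List.length_drop]; omega
      refine List.mem_iff_getElem.2 ⟨(j : ℕ) - ((i : ℕ) + 1), ht, ?_⟩
      rw [List.getElem_drop, List.get_eq_getElem]
      congr 1
      simp only [Fin.coe_cast]
      omega
    · rintro ⟨hadj, hv⟩
      refine ⟨hadj, ?_⟩
      obtain ⟨t, ht, hvt⟩ := List.mem_iff_getElem.1 hv
      rw [List.getElem_drop] at hvt
      have htlen : (i : ℕ) + 1 + t < L.length := by
        rw [List.length_drop] at ht; omega
      have hlt : (i : ℕ) + 1 + t < n := by omega
      refine ⟨⟨(i : ℕ) + 1 + t, hlt⟩, by rw [Fin.lt_def]; simp; omega, ?_⟩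
      rw [happ, List.get_eq_getElem]
      exact hvt
  rw [hseteq]
  exact h (i : ℕ) hi

end Final

/-- A vine on `n ≥ 2` variables has at least `2 ^ (n - 1)` distinct orderings of its
variables, each of which is a perfect elimination ordering of the chordal graph
representation of every tree `T_1, …, T_(n-1)` of the vine. -/
theorem vine_card_perfectEliminationOrderings {n : ℕ} (hn : 2 ≤ n) (W : Vine n) :
    2 ^ (n - 1) ≤
      Set.ncard {σ : Fin n ≃ Fin n |
        ∀ k, 1 ≤ k → k ≤ n - 1 → IsPerfectEliminationOrdering (W.repGraph k) σ} := by
  classical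
  have hcard : (Finset.univ : Finset (Fin n)).card = n := Finset.card_fin n
  have hmain := gvine_main n hn Finset.univ hcard W.toGVine
  set GoodL := {L : List (Fin n) | L.Nodup ∧ L.toFinset = Finset.univ ∧
    ∀ k, 1 ≤ k → k ≤ (Finset.univ : Finset (Fin n)).card - 1 →
      peoList (W.toGVine.grep k) L} with hGoodL
  set GoodP := {σ : Fin n ≃ Fin n |
    ∀ k, 1 ≤ k → k ≤ n - 1 → IsPerfectEliminationOrdering (W.repGraph k) σ} with hGoodP
  have hlen_of : ∀ L ∈ GoodL, L.length = n := by
    rintro L ⟨hnd, htf, _⟩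
    rw [← List.toFinset_card_of_nodup hnd, htf, hcard]
  have hsub : listToPerm '' GoodL ⊆ GoodP := by
    rintro _ ⟨L, hL, rfl⟩
    obtain ⟨hnd, htf, hpeo⟩ := hL
    have hlen : L.length = n := hlen_of L ⟨hnd, htf, hpeo⟩
    intro k hk1 hk2
    have hp : peoList (W.repGraph k) L := by
      rw [← W.toGVine_grep k]
      exact hpeo k hk1 (by rwa [hcard])
    exact peo_of_peoList hlen hnd hp
  have hinj : Set.InjOn listToPerm GoodL := by
    intro L1 hL1 L2 hL2 hEq
    have hlen1 := hlen_of L1 hL1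
    have hlen2 := hlen_of L2 hL2
    apply List.ext_get (by rw [hlen1, hlen2])
    intro i hi1 hi2
    have hin : i < n := by omega
    have h := congrArg (fun σ : Fin n ≃ Fin n => σ ⟨i, hin⟩) hEq
    simp only [listToPerm_apply hlen1 hL1.1, listToPerm_apply hlen2 hL2.1] at h
    exact h
  calc 2 ^ (n - 1) ≤ GoodL.ncard := hmain
    _ = (listToPerm '' GoodL).ncard := (Set.ncard_image_of_injOn hinj).symm
    _ ≤ GoodP.ncard := Set.ncard_le_ncard hsub (Set.toFinite _)
end
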